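/- arXiv:1601.05884 — 9 statements merged into one kernel-verified Lean document; each statement's English description precedes it below -/
import Mathlib

section
/- (Shanin / Δ-system lemma) Let κ be an uncountable regular cardinal and (T_γ : γ ∈ Γ) a family of finite sets with |Γ| = κ. Then there exist Δ ⊆ Γ with |Δ| = κ and a finite set S such that T_β ∩ T_γ = S for all distinct β, γ ∈ Δ. -/
open Cardinal

universe u

/-- Auxiliary: the Δ-system lemma for families of sets of fixed size `n`. -/
theorem delta_aux (n : ℕ) : ∀ {α ι : Type u} [DecidableEq α] (κ : Cardinal.{u}),
    κ.IsRegular → Cardinal.aleph0 < κ → ∀ (T : ι → Finset α), (∀ γ, (T γ).card = n) →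
    κ ≤ #ι → ∃ Δ : Set ι, κ ≤ #Δ ∧ ∃ S : Finset α,
      ∀ β ∈ Δ, ∀ γ ∈ Δ, β ≠ γ → T β ∩ T γ = S := by
  induction n with
  | zero =>
    intro α ι _ κ hreg hunc T hcard hι
    refine ⟨Set.univ, by rwa [Cardinal.mk_univ], ∅, fun β _ γ _ _ => ?_⟩
    have : T β = ∅ := Finset.card_eq_zero.mp (hcard β)
    simp [this]
  | succ n ih =>
    intro α ι _ κ hreg hunc T hcard hι
    by_cases hA : ∃ a : α, κ ≤ #{γ : ι | a ∈ T γ}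
    · -- some element occurs κ-many times
      obtain ⟨a, ha⟩ := hA
      set ι' := {γ : ι // a ∈ T γ}
      have hcard' : ∀ γ : ι', ((T γ.1).erase a).card = n := by
        intro γ
        rw [Finset.card_erase_of_mem γ.2, hcard]
        rfl
      obtain ⟨Δ', hΔ', S', hS'⟩ := ih κ hreg hunc (fun γ : ι' => (T γ.1).erase a) hcard' ha
      refine ⟨Subtype.val '' Δ', ?_, insert a S', ?_⟩
      · rwa [Cardinal.mk_image_eq Subtype.val_injective]
      · rintro β ⟨β', hβ', rfl⟩ γ ⟨γ', hγ', rfl⟩ hne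
        have hne' : β' ≠ γ' := fun h => hne (congrArg Subtype.val h)
        have h1 := hS' β' hβ' γ' hγ' hne'
        have haβ : a ∈ T β'.1 ∩ T γ'.1 := Finset.mem_inter.mpr ⟨β'.2, γ'.2⟩
        have : (T β'.1 ∩ T γ'.1).erase a = S' := by
          rw [← h1]; ext x; simp [Finset.mem_erase, Finset.mem_inter]; tauto
        rw [← Finset.insert_erase haβ, this]
    · -- every element occurs < κ many times
      push_neg at hA
      have hchaincond : ∀ c ⊆ {Δ : Set ι | ∀ β ∈ Δ, ∀ γ ∈ Δ, β ≠ γ → T β ∩ T γ = ∅},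
          IsChain (· ⊆ ·) c → ∃ ub ∈ {Δ : Set ι | ∀ β ∈ Δ, ∀ γ ∈ Δ, β ≠ γ → T β ∩ T γ = ∅},
            ∀ s ∈ c, s ⊆ ub := by
        intro c hc hchain
        refine ⟨⋃₀ c, ?_, fun s hs => Set.subset_sUnion_of_mem hs⟩
        rintro β ⟨s, hs, hβ⟩ γ ⟨t, ht, hγ⟩ hne
        rcases hchain.total hs ht with h | h
        · exact hc ht β (h hβ) γ hγ hne
        · exact hc hs β hβ γ (h hγ) hne
      obtain ⟨Δ, hmax⟩ := zorn_subset _ hchaincond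
      refine ⟨Δ, ?_, ∅, hmax.prop⟩
      by_contra hlt
      push_neg at hlt
      -- X = union of the T β, β ∈ Δ
      set X : Set α := ⋃ β : Δ, (T β.1 : Set α) with hX
      have hXlt : #X < κ := by
        calc #X ≤ #Δ * ⨆ β : Δ, #(T β.1 : Set α) := Cardinal.mk_iUnion_le _
          _ ≤ #Δ * ℵ₀ := by
              exact mul_le_mul_right (ciSup_le' fun β => (Cardinal.lt_aleph0_of_finite _).le) _
          _ < κ := Cardinal.mul_lt_of_lt hreg.aleph0_le hlt hunc
      have hBadlt : #(⋃ a : X, {γ : ι | (a : α) ∈ T γ}) < κ := by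
        refine lt_of_le_of_lt Cardinal.mk_iUnion_le_sum_mk ?_
        exact Cardinal.sum_lt_of_isRegular hreg hXlt fun a => hA a
      obtain ⟨γ, hγ⟩ : ∃ γ : ι, γ ∉ ⋃ a : X, {γ : ι | (a : α) ∈ T γ} := by
        by_contra h
        push_neg at h
        have : #(⋃ a : X, {γ : ι | (a : α) ∈ T γ}) = #ι := by
          rw [show (⋃ a : X, {γ : ι | (a : α) ∈ T γ}) = Set.univ from
            Set.eq_univ_of_forall h, Cardinal.mk_univ]
        exact absurd (this ▸ hBadlt) (not_lt.mpr hι)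
      have hdisj : ∀ β ∈ Δ, T γ ∩ T β = ∅ := by
        intro β hβ
        ext x
        simp only [Finset.mem_inter, Finset.notMem_empty, iff_false, not_and]
        intro hxγ hxβ
        exact hγ (Set.mem_iUnion.mpr ⟨⟨x, Set.mem_iUnion.mpr ⟨⟨β, hβ⟩, hxβ⟩⟩, hxγ⟩)
      have hγΔ : γ ∉ Δ := by
        intro hγΔ
        have hne : T γ ≠ ∅ := by
          intro h
          have := hcard γ
          rw [h] at this
          simp at this
        exact hne (by simpa using hdisj γ hγΔ)
      have : insert γ Δ ∈ {Δ : Set ι | ∀ β ∈ Δ, ∀ γ ∈ Δ, β ≠ γ → T β ∩ T γ = ∅} := by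
        intro β hβ δ hδ hne
        rcases hβ with rfl | hβ <;> rcases hδ with rfl | hδ
        · exact absurd rfl hne
        · exact hdisj δ hδ
        · rw [Finset.inter_comm]; exact hdisj β hβ
        · exact hmax.prop β hβ δ hδ hne
      have heq := hmax.eq_of_ge this (Set.subset_insert _ _)
      exact hγΔ (heq ▸ Set.mem_insert γ Δ)

/-- Shanin's Δ-system lemma for uncountable regular cardinals. -/
theorem delta_system_lemma {α ι : Type u} [DecidableEq α] (κ : Cardinal.{u})
    (hreg : κ.IsRegular) (hunc : Cardinal.aleph0 < κ)
    (T : ι → Finset α) (hι : #ι = κ) :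
    ∃ Δ : Set ι, #Δ = κ ∧ ∃ S : Finset α,
      ∀ β ∈ Δ, ∀ γ ∈ Δ, β ≠ γ → T β ∩ T γ = S := by
  -- find n such that κ-many sets have size n
  obtain ⟨n, hn⟩ := Cardinal.infinite_pigeonhole_card
    (fun γ : ι => (ULift.up (T γ).card : ULift.{u} ℕ)) κ hι.ge hreg.aleph0_le
    (by rw [hreg.cof_eq]; simpa using hunc)
  set A := (fun γ : ι => (ULift.up (T γ).card : ULift.{u} ℕ)) ⁻¹' {n}
  have hcardA : ∀ γ : A, (T γ.1).card = n.down := by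
    rintro ⟨γ, hγ⟩
    simpa using congrArg ULift.down hγ
  obtain ⟨Δ', hΔ', S, hS⟩ := delta_aux n.down κ hreg hunc (fun γ : A => T γ.1) hcardA hn
  -- shrink to exactly κ
  obtain ⟨s, hs⟩ := Cardinal.le_mk_iff_exists_set.mp hΔ'
  refine ⟨Subtype.val '' (Subtype.val '' s), ?_, S, ?_⟩
  · rw [Cardinal.mk_image_eq Subtype.val_injective,
      Cardinal.mk_image_eq Subtype.val_injective, hs]
  · rintro β ⟨β', ⟨β'', hβ'', rfl⟩, rfl⟩ γ ⟨γ', ⟨γ'', hγ'', rfl⟩, rfl⟩ hne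
    exact hS β''.1 β''.2 γ''.1 γ''.2 (fun h => hne (congrArg Subtype.val h))
end

section
/- Let X be a Baire space such that every regular uncountable cardinal is a caliber of X. Then for every ordinal α and every increasing family (A_ξ : ξ < α) of closed subsets of X, int(⋃_{ξ<α} A_ξ) ⊆ closure(⋃_{ξ<α} int(A_ξ)). In particular, X is strongly Baire. -/
universe u

/-- A cardinal `κ` is a caliber of `X` if every `κ`-indexed family of nonempty open
subsets of `X` admits a `κ`-sized subfamily with nonempty intersection. -/
def IsCaliber (X : Type u) [TopologicalSpace X] (κ : Cardinal.{u}) : Prop :=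
  ∀ (ι : Type u) (U : ι → Set X), Cardinal.mk ι = κ →
    (∀ i, IsOpen (U i) ∧ (U i).Nonempty) →
    ∃ B : Set ι, Cardinal.mk B = κ ∧ (⋂ i ∈ B, U i).Nonempty

/-- `X` is strongly Baire if for every ordinal `α` and all increasing families
`(A ξ : ξ < α)`, `(B ξ : ξ < α)` of closed subsets of `X` such that `(B ξ)` occupies
`(A ξ)` (i.e. `A ξ ⊆ B ξ` for all `ξ < α` and `A β ⊆ ⋃_{ξ<β} B ξ` for limit `β < α`),
the interior of `⋃_{ξ<α} A ξ` is contained in the closure of `⋃_{ξ<α} interior (B ξ)`. -/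
def StronglyBaire (X : Type u) [TopologicalSpace X] : Prop :=
  ∀ (α : Ordinal.{u}) (A B : Ordinal.{u} → Set X),
    (∀ ξ < α, IsClosed (A ξ)) → (∀ ξ < α, IsClosed (B ξ)) →
    (∀ ξ η, ξ ≤ η → η < α → A ξ ⊆ A η) →
    (∀ ξ η, ξ ≤ η → η < α → B ξ ⊆ B η) →
    (∀ ξ < α, A ξ ⊆ B ξ) →
    (∀ β, Order.IsSuccLimit β → β < α → A β ⊆ ⋃ ξ ∈ Set.Iio β, B ξ) →
    interior (⋃ ξ ∈ Set.Iio α, A ξ) ⊆ closure (⋃ ξ ∈ Set.Iio α, interior (B ξ))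

instance instWO_toType_lt (o : Ordinal.{u}) : IsWellOrder o.ToType (· < ·) := isWellOrder_lt

theorem aux_baire_caliber (X : Type u) [TopologicalSpace X] [BaireSpace X]
    (hcal : ∀ κ : Cardinal.{u}, κ.IsRegular → Cardinal.aleph0 < κ → IsCaliber X κ)
    (α : Ordinal.{u}) (A : Ordinal.{u} → Set X)
    (hA : ∀ ξ < α, IsClosed (A ξ)) (hmono : ∀ ξ η, ξ ≤ η → η < α → A ξ ⊆ A η) :
    interior (⋃ ξ ∈ Set.Iio α, A ξ) ⊆ closure (⋃ ξ ∈ Set.Iio α, interior (A ξ)) := by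
  intro x hx
  rw [mem_closure_iff]
  intro N hNo hxN
  by_contra hcon
  rw [Set.not_nonempty_iff_eq_empty] at hcon
  set W : Set X := N ∩ interior (⋃ ξ ∈ Set.Iio α, A ξ) with hWdef
  have hWo : IsOpen W := hNo.inter isOpen_interior
  have hxW : x ∈ W := ⟨hxN, hx⟩
  have hWsub : W ⊆ ⋃ ξ ∈ Set.Iio α, A ξ := fun y hy => interior_subset hy.2
  have hWd : ∀ ξ < α, W ∩ interior (A ξ) = ∅ := by
    intro ξ hξ
    rw [Set.eq_empty_iff_forall_notMem]
    rintro y ⟨hyW, hyi⟩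
    have hmem : y ∈ N ∩ ⋃ ξ ∈ Set.Iio α, interior (A ξ) :=
      ⟨hyW.1, Set.mem_biUnion hξ hyi⟩
    rw [hcon] at hmem
    exact hmem
  have hnot : ∀ η < α, ¬ W ⊆ A η := by
    intro η hη hsub
    have h1 : W ⊆ interior (A η) := interior_maximal hsub hWo
    have h2 := hWd η hη
    rw [Set.eq_empty_iff_forall_notMem] at h2
    exact h2 x ⟨hxW, h1 hxW⟩
  -- the least ordinal `α'` such that `W ⊆ ⋃_{ξ < α'} A ξ`
  set S : Set Ordinal.{u} := {β | W ⊆ ⋃ ξ ∈ Set.Iio β, A ξ} with hSdef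
  have hSne : S.Nonempty := ⟨α, hWsub⟩
  set α' := sInf S with hα'def
  have hα'S : W ⊆ ⋃ ξ ∈ Set.Iio α', A ξ := csInf_mem hSne
  have hα'le : α' ≤ α := csInf_le' hWsub
  have hlim : Order.IsSuccLimit α' := by
    rcases Ordinal.zero_or_succ_or_isSuccLimit α' with h0 | ⟨γ, hγ⟩ | hl
    · exfalso
      obtain ⟨ξ, hξ, -⟩ := Set.mem_iUnion₂.1 (hα'S hxW)
      rw [h0] at hξ
      exact (zero_le (a := ξ)).not_gt hξ
    · exfalso
      replace hγ := hγ.symm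
      have hγα : γ < α := lt_of_lt_of_le (hγ ▸ Order.lt_succ γ) hα'le
      refine hnot γ hγα fun y hy => ?_
      obtain ⟨ξ, hξ, hyA⟩ := Set.mem_iUnion₂.1 (hα'S hy)
      rw [hγ, Set.mem_Iio, Order.lt_succ_iff] at hξ
      exact hmono ξ γ hξ hγα hyA
    · exact hl
  rcases le_or_gt α'.cof Cardinal.aleph0 with h1 | h1
  · -- countable cofinality: use the Baire property
    obtain ⟨ι, g, hglsub, hgcard⟩ := Ordinal.exists_lsub_cof α'
    have hgα' : ∀ i, g i < α' := fun i => hglsub ▸ Ordinal.lt_lsub g i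
    have hgα : ∀ i, g i < α := fun i => (hgα' i).trans_le hα'le
    have hcount : Countable ι := by
      rw [← Cardinal.mk_le_aleph0_iff, hgcard]
      exact h1
    set F : Option ι → Set X := fun j => Option.elim j Wᶜ (fun i => A (g i)) with hFdef
    have hFc : ∀ j, IsClosed (F j) := by
      rintro (_ | i)
      · exact hWo.isClosed_compl
      · exact hA _ (hgα i)
    have hcover : ⋃ j, F j = Set.univ := by
      ext y
      simp only [Set.mem_iUnion, Set.mem_univ, iff_true]
      by_cases hy : y ∈ W
      · obtain ⟨ξ, hξ, hyA⟩ := Set.mem_iUnion₂.1 (hα'S hy)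
        rw [Set.mem_Iio, ← hglsub, Ordinal.lt_lsub_iff] at hξ
        obtain ⟨i, hi⟩ := hξ
        exact ⟨some i, hmono ξ (g i) hi (hgα i) hyA⟩
      · exact ⟨none, hy⟩
    have hdense := dense_iUnion_interior_of_closed hFc hcover
    obtain ⟨y, hyW, hyU⟩ := hdense.inter_open_nonempty W hWo ⟨x, hxW⟩
    obtain ⟨j, hyj⟩ := Set.mem_iUnion.1 hyU
    cases j with
    | none => exact (interior_subset hyj : y ∈ Wᶜ) hyW
    | some i =>
        have h2 := hWd (g i) (hgα i)
        rw [Set.eq_empty_iff_forall_notMem] at h2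
        exact h2 y ⟨hyW, hyj⟩
  · -- uncountable cofinality: use the caliber hypothesis
    set κ := α'.cof with hκdef
    have hreg : κ.IsRegular := Cardinal.isRegular_cof hlim
    obtain ⟨f, hf⟩ := Ordinal.exists_fundamental_sequence α'
    set e : κ.ord.ToType → Ordinal.{u} := fun b =>
      f (Ordinal.typein (α := κ.ord.ToType) (· < ·) b) (Ordinal.typein_lt_self b) with hedef
    have helt : ∀ b, e b < α' := fun b => hf.lt _
    have heα : ∀ b, e b < α := fun b => (helt b).trans_le hα'le
    set U : κ.ord.ToType → Set X := fun b => W \ A (e b) with hUdef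
    have hU : ∀ b, IsOpen (U b) ∧ (U b).Nonempty := fun b =>
      ⟨hWo.sdiff (hA _ (heα b)), Set.diff_nonempty.2 (hnot _ (heα b))⟩
    have hTcard : Cardinal.mk κ.ord.ToType = κ := by
      rw [Cardinal.mk_toType, Cardinal.card_ord]
    obtain ⟨B, hBcard, y, hy⟩ := hcal κ hreg h1 κ.ord.ToType U hTcard hU
    have hBneT : Nonempty B := by
      rw [← Cardinal.mk_ne_zero_iff, hBcard]
      exact hreg.pos.ne'
    obtain ⟨b₁, hb₁⟩ := hBneT
    have hyW : y ∈ W := (Set.mem_iInter₂.1 hy b₁ hb₁).1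
    obtain ⟨η, hη, hyA⟩ := Set.mem_iUnion₂.1 (hα'S hyW)
    rw [Set.mem_Iio] at hη
    have hη' : η < Ordinal.blsub _ f := hf.blsub_eq.symm ▸ hη
    obtain ⟨c, hc, hcη⟩ := Ordinal.lt_blsub_iff.1 hη'
    set b₀ : κ.ord.ToType := Ordinal.enum (α := κ.ord.ToType) (· < ·)
      ⟨c, by rw [Ordinal.type_toType]; exact hc⟩ with hb₀def
    have htyb₀ : Ordinal.typein (α := κ.ord.ToType) (· < ·) b₀ = c := Ordinal.typein_enum _ _
    have hb₀ : ∀ b ∈ B, b < b₀ := by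
      intro b hb
      by_contra hge
      push_neg at hge
      have hcty : c ≤ Ordinal.typein (α := κ.ord.ToType) (· < ·) b := by
        rw [← htyb₀]
        exact (Ordinal.typein_le_typein' κ.ord).2 hge
      have hηe : η ≤ e b := hcη.trans (hf.monotone hc (Ordinal.typein_lt_self b) hcty)
      have hyUb := Set.mem_iInter₂.1 hy b hb
      exact hyUb.2 (hmono η (e b) hηe (heα b) hyA)
    have hsub : B ⊆ Set.Iio b₀ := fun b hb => hb₀ b hb
    have hle : Cardinal.mk B ≤ Cardinal.mk (Set.Iio b₀) := Cardinal.mk_le_mk_of_subset hsub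
    rw [hBcard] at hle
    exact absurd (hle.trans_lt (Cardinal.mk_Iio_ord_toType b₀)) (lt_irrefl κ)

/-- A Baire space in which every regular uncountable cardinal is a caliber satisfies
`int (⋃ A ξ) ⊆ closure (⋃ int (A ξ))` for every ordinal-indexed increasing family of
closed sets; in particular it is strongly Baire. -/
theorem baire_caliber_stronglyBaire (X : Type u) [TopologicalSpace X] [BaireSpace X]
    (hcal : ∀ κ : Cardinal.{u}, κ.IsRegular → Cardinal.aleph0 < κ → IsCaliber X κ) :
    (∀ (α : Ordinal.{u}) (A : Ordinal.{u} → Set X),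
      (∀ ξ < α, IsClosed (A ξ)) → (∀ ξ η, ξ ≤ η → η < α → A ξ ⊆ A η) →
      interior (⋃ ξ ∈ Set.Iio α, A ξ) ⊆ closure (⋃ ξ ∈ Set.Iio α, interior (A ξ)))
    ∧ StronglyBaire X := by
  refine ⟨aux_baire_caliber X hcal, ?_⟩
  intro α A B hAc hBc hAm hBm hAB _
  exact (interior_mono (Set.iUnion₂_mono fun ξ hξ => hAB ξ hξ)).trans
    (aux_baire_caliber X hcal α B hBc hBm)
end

section
/- If a product X = ∏_{t∈T} X_t of separable topological spaces is a Baire space, then X is a strongly Baire space. -/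
universe u

open Cardinal Set

lemma pigeon_aux {κ : Cardinal.{u}} (hreg : κ.IsRegular) {ι β : Type u} (hβ : #β < κ)
    (f : ι → β) (S : Set ι) (hS : κ ≤ #S) : ∃ b : β, κ ≤ #{i | i ∈ S ∧ f i = b} := by
  by_contra h
  push_neg at h
  have hcov : S ⊆ ⋃ b : β, {i | i ∈ S ∧ f i = b} := fun i hi => mem_iUnion.2 ⟨f i, hi, rfl⟩
  have hle : #S ≤ Cardinal.sum fun b : β => #{i | i ∈ S ∧ f i = b} :=
    (Cardinal.mk_le_mk_of_subset hcov).trans Cardinal.mk_iUnion_le_sum_mk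
  exact absurd (hS.trans hle) (not_le.2 (Cardinal.sum_lt_of_isRegular hreg hβ h))

lemma delta_system_aux {κ : Cardinal.{u}} (hreg : κ.IsRegular) (hω : ℵ₀ < κ)
    {ι T : Type u} [DecidableEq T] :
    ∀ (n : ℕ) (F : ι → Finset T) (S : Set ι), κ ≤ #S →
    (∀ i ∈ S, (F i).card = n) →
    ∃ (S' : Set ι) (R : Finset T), S' ⊆ S ∧ κ ≤ #S' ∧
      ∀ i ∈ S', ∀ j ∈ S', i ≠ j → F i ∩ F j = R := by
  intro n
  induction n with
  | zero =>
    intro F S hS hcard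
    refine ⟨S, ∅, subset_rfl, hS, fun i hi j hj _ => ?_⟩
    rw [Finset.card_eq_zero.1 (hcard i hi), Finset.empty_inter]
  | succ n ih =>
    intro F S hS hcard
    by_cases hx : ∃ x : T, κ ≤ #{i | i ∈ S ∧ x ∈ F i}
    · obtain ⟨x, hx⟩ := hx
      obtain ⟨S', R', hsub, hS', hR'⟩ := ih (fun i => (F i).erase x) {i | i ∈ S ∧ x ∈ F i} hx
        (fun i hi => by rw [Finset.card_erase_of_mem hi.2, hcard i hi.1]; rfl)
      refine ⟨S', insert x R', fun i hi => (hsub hi).1, hS', fun i hi j hj hij => ?_⟩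
      have hxi : x ∈ F i := (hsub hi).2
      have hxj : x ∈ F j := (hsub hj).2
      have hkey := hR' i hi j hj hij
      ext a
      simp only [Finset.mem_inter, Finset.mem_insert]
      constructor
      · rintro ⟨hai, haj⟩
        by_cases hax : a = x
        · exact Or.inl hax
        · right; rw [← hkey]
          simp only [Finset.mem_inter, Finset.mem_erase]
          exact ⟨⟨hax, hai⟩, ⟨hax, haj⟩⟩
      · rintro (rfl | ha)
        · exact ⟨hxi, hxj⟩
        · rw [← hkey] at ha
          simp only [Finset.mem_inter, Finset.mem_erase] at ha
          exact ⟨ha.1.2, ha.2.2⟩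
    · push_neg at hx
      have hchains : ∀ c ⊆ {M : Set ι | M ⊆ S ∧ ∀ i ∈ M, ∀ j ∈ M, i ≠ j → F i ∩ F j = ∅},
          IsChain (· ⊆ ·) c →
          ∃ ub ∈ {M : Set ι | M ⊆ S ∧ ∀ i ∈ M, ∀ j ∈ M, i ≠ j → F i ∩ F j = ∅},
            ∀ s ∈ c, s ⊆ ub := by
        intro c hc hchain
        refine ⟨⋃₀ c, ⟨fun i hi => ?_, fun i hi j hj hij => ?_⟩, fun s hs => subset_sUnion_of_mem hs⟩
        · obtain ⟨s, hs, his⟩ := hi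
          exact (hc hs).1 his
        · obtain ⟨s, hs, his⟩ := hi
          obtain ⟨s', hs', hjs'⟩ := hj
          rcases hchain.total hs hs' with h | h
          · exact (hc hs').2 i (h his) j hjs' hij
          · exact (hc hs).2 i his j (h hjs') hij
      obtain ⟨M, hM⟩ := zorn_subset
          {M : Set ι | M ⊆ S ∧ ∀ i ∈ M, ∀ j ∈ M, i ≠ j → F i ∩ F j = ∅} hchains
      rcases le_or_gt κ #M with hMκ | hMκ
      · exact ⟨M, ∅, hM.prop.1, hMκ, hM.prop.2⟩
      -- derive a contradiction : S is covered by M and fibers over elements of ⋃ j ∈ M, F j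
      exfalso
      set Uel : Set T := ⋃ j ∈ M, (F j : Set T) with hUel
      have hcov : S ⊆ M ∪ ⋃ x : Uel, {i | i ∈ S ∧ (x : T) ∈ F i} := by
        intro i hiS
        by_cases hiM : i ∈ M
        · exact Or.inl hiM
        right
        have hnotP : ¬ (insert i M ∈
            {M : Set ι | M ⊆ S ∧ ∀ a ∈ M, ∀ b ∈ M, a ≠ b → F a ∩ F b = ∅}) := by
          intro hP
          exact hiM (hM.2 hP (subset_insert i M) (mem_insert i M))
        have : ∃ a ∈ insert i M, ∃ b ∈ insert i M, a ≠ b ∧ F a ∩ F b ≠ ∅ := by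
          by_contra hcon
          push_neg at hcon
          exact hnotP ⟨insert_subset hiS hM.prop.1, fun a ha b hb hab => hcon a ha b hb hab⟩
        obtain ⟨a, ha, b, hb, hab, hne⟩ := this
        obtain ⟨y, hy⟩ := Finset.nonempty_iff_ne_empty.2 hne
        rw [Finset.mem_inter] at hy
        rcases mem_insert_iff.1 ha with rfl | haM
        · have hbM : b ∈ M := (mem_insert_iff.1 hb).resolve_left (fun h => hab h.symm)
          have hyU : y ∈ Uel := mem_iUnion₂.2 ⟨b, hbM, hy.2⟩
          exact mem_iUnion.2 ⟨⟨y, hyU⟩, hiS, hy.1⟩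
        rcases mem_insert_iff.1 hb with rfl | hbM
        · have hyU : y ∈ Uel := mem_iUnion₂.2 ⟨a, haM, hy.1⟩
          exact mem_iUnion.2 ⟨⟨y, hyU⟩, hiS, hy.2⟩
        · have hemp := hM.prop.2 a haM b hbM hab
          rw [Finset.eq_empty_iff_forall_notMem] at hemp
          exact absurd (Finset.mem_inter.2 hy) (hemp y)
      have hUelκ : #Uel < κ := by
        rw [hUel, biUnion_eq_iUnion]
        rw [card_iUnion_lt_iff_forall_of_isRegular hreg hMκ]
        intro j
        exact lt_of_le_of_lt (Cardinal.mk_le_aleph0) hω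
      have hfibers : #(⋃ x : Uel, {i | i ∈ S ∧ (x : T) ∈ F i}) < κ := by
        rw [card_iUnion_lt_iff_forall_of_isRegular hreg hUelκ]
        exact fun x => hx x
      have : #S < κ := by
        calc #S ≤ #(M ∪ ⋃ x : Uel, {i | i ∈ S ∧ (x : T) ∈ F i} : Set ι) :=
              Cardinal.mk_le_mk_of_subset hcov
          _ ≤ #M + #(⋃ x : Uel, {i | i ∈ S ∧ (x : T) ∈ F i}) := Cardinal.mk_union_le _ _
          _ < κ := Cardinal.add_lt_of_lt hreg.aleph0_le hMκ hfibers
      exact absurd hS (not_le.2 this)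

lemma delta_system {κ : Cardinal.{u}} (hreg : κ.IsRegular) (hω : ℵ₀ < κ)
    {ι T : Type u} [DecidableEq T] (F : ι → Finset T) (S : Set ι) (hS : κ ≤ #S) :
    ∃ (S' : Set ι) (R : Finset T), S' ⊆ S ∧ κ ≤ #S' ∧
      ∀ i ∈ S', ∀ j ∈ S', i ≠ j → F i ∩ F j = R := by
  have hβ : #(ULift.{u} ℕ) < κ := by simpa using hω
  obtain ⟨b, hb⟩ := pigeon_aux hreg hβ (fun i => ULift.up (F i).card) S hS
  obtain ⟨S', R, h1, h2, h3⟩ := delta_system_aux hreg hω b.down F _ hb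
    (fun i hi => congrArg ULift.down hi.2)
  exact ⟨S', R, fun i hi => (h1 hi).1, h2, h3⟩

open TopologicalSpace in
lemma caliber_pi {κ : Cardinal.{u}} (hreg : κ.IsRegular) (hω : ℵ₀ < κ)
    {T ι : Type u} {X : T → Type u} [∀ t, TopologicalSpace (X t)]
    [∀ t, SeparableSpace (X t)] (hι : κ ≤ #ι)
    (U : ι → Set (∀ t, X t)) (hop : ∀ i, IsOpen (U i)) (hne : ∀ i, (U i).Nonempty) :
    ∃ S : Set ι, κ ≤ #S ∧ (⋂ i ∈ S, U i).Nonempty := by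
  classical
  have hιne : Nonempty ι := by
    rw [← Cardinal.mk_ne_zero_iff]
    intro h
    rw [h] at hι
    exact absurd (lt_of_lt_of_le (aleph0_pos.trans hω) hι) (lt_irrefl 0)
  obtain ⟨i₀⟩ := hιne
  obtain ⟨x₀, -⟩ := hne i₀
  haveI : ∀ t, Nonempty (X t) := fun t => ⟨x₀ t⟩
  have hbox : ∀ i, ∃ (Fi : Finset T) (V : ∀ t, Set (X t)),
      (∀ t ∈ Fi, IsOpen (V t) ∧ (hne i).choose t ∈ V t) ∧ (Fi : Set T).pi V ⊆ U i :=
    fun i => isOpen_pi_iff.1 (hop i) _ (hne i).choose_spec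
  choose Fi V hV hVsub using hbox
  have hnex : ∀ i, ∀ t, t ∈ Fi i → ∃ m : ℕ, denseSeq (X t) m ∈ V i t := fun i t ht =>
    (denseRange_denseSeq (X t)).exists_mem_open (hV i t ht).1 ⟨_, (hV i t ht).2⟩
  choose nn hnn using hnex
  set n' : ι → T → ℕ := fun i t => if h : t ∈ Fi i then nn i t h else 0 with hn'
  have hn'mem : ∀ i, ∀ t ∈ Fi i, denseSeq (X t) (n' i t) ∈ V i t := by
    intro i t ht
    simp only [hn', dif_pos ht]
    exact hnn i t ht
  -- Δ-system
  obtain ⟨S₁, R, -, hS₁, hR⟩ := delta_system hreg hω Fi Set.univ (by rwa [Cardinal.mk_univ])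
  -- uniformize on the root
  have hRcnt : #(↥(R : Finset T) → ℕ) < κ :=
    lt_of_le_of_lt Cardinal.mk_le_aleph0 hω
  obtain ⟨ν, hν⟩ := pigeon_aux hreg hRcnt (fun i => fun r : ↥(R : Finset T) => n' i r.1) S₁ hS₁
  set S₂ : Set ι := {i | i ∈ S₁ ∧ (fun r : ↥(R : Finset T) => n' i r.1) = ν} with hS₂
  -- define the common point
  set m : T → ℕ := fun t => if h : ∃ i, i ∈ S₂ ∧ t ∈ Fi i then n' h.choose t else 0 with hm
  set y : ∀ t, X t := fun t => denseSeq (X t) (m t) with hy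
  have hmkey : ∀ j ∈ S₂, ∀ t ∈ Fi j, m t = n' j t := by
    intro j hj t ht
    have hex : ∃ i, i ∈ S₂ ∧ t ∈ Fi i := ⟨j, hj, ht⟩
    simp only [hm, dif_pos hex]
    obtain ⟨hiS₂, hti⟩ := hex.choose_spec
    rcases eq_or_ne hex.choose j with heq | hne2
    · rw [heq]
    · have htR : t ∈ R := by
        have := hR hex.choose hiS₂.1 j hj.1 hne2
        rw [← this]
        exact Finset.mem_inter.2 ⟨hti, ht⟩
      have h1 : n' hex.choose t = ν ⟨t, htR⟩ := congrFun hiS₂.2 ⟨t, htR⟩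
      have h2 : n' j t = ν ⟨t, htR⟩ := congrFun hj.2 ⟨t, htR⟩
      rw [h1, h2]
  refine ⟨S₂, hν, ⟨y, Set.mem_iInter₂.2 fun j hj => ?_⟩⟩
  apply hVsub j
  intro t ht
  simp only [hy]
  rw [hmkey j hj t ht]
  exact hn'mem j t ht

/-- If a product of separable spaces is a Baire space then it is strongly Baire. -/
theorem product_separable_baire_stronglyBaire {T : Type u} (X : T → Type u)
    [∀ t, TopologicalSpace (X t)] [∀ t, TopologicalSpace.SeparableSpace (X t)]
    [BaireSpace (∀ t, X t)] :
    StronglyBaire (∀ t, X t) := by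
  intro α A B hAcl hBcl hAmono hBmono hAB _hlim
  rcases Ordinal.zero_or_succ_or_isSuccLimit α with rfl | ⟨δ, rfl⟩ | hα
  · simp [not_lt_zero]
  · -- successor case
    have h1 : (⋃ ξ ∈ Set.Iio (Order.succ δ), A ξ) ⊆ B δ := by
      intro x hx
      obtain ⟨ξ, hξ, hxξ⟩ := Set.mem_iUnion₂.1 hx
      exact hAB δ (Order.lt_succ δ)
        (hAmono ξ δ (Order.lt_succ_iff.1 hξ) (Order.lt_succ δ) hxξ)
    refine (interior_mono h1).trans ?_
    refine subset_trans ?_ subset_closure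
    exact Set.subset_biUnion_of_mem (u := fun ξ => interior (B ξ)) (Order.lt_succ δ)
  · -- limit case
    by_contra hcon
    rw [Set.not_subset] at hcon
    obtain ⟨z, hzU, hzC⟩ := hcon
    set C := closure (⋃ ξ ∈ Set.Iio α, interior (B ξ)) with hC
    set W := interior (⋃ ξ ∈ Set.Iio α, A ξ) \ C with hW
    have hWopen : IsOpen W := isOpen_interior.sdiff isClosed_closure
    have hWne : W.Nonempty := ⟨z, hzU, hzC⟩
    have hWsub : W ⊆ ⋃ ξ ∈ Set.Iio α, A ξ := fun x hx => interior_subset hx.1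
    -- key disjointness fact
    have hkey : ∀ ξ < α, ∀ V : Set (∀ t, X t), IsOpen V → V ⊆ B ξ → V ∩ W = ∅ := by
      intro ξ hξ V hVopen hVB
      have h1 : V ⊆ C := by
        refine subset_trans ?_ subset_closure
        refine subset_trans ?_ (Set.subset_biUnion_of_mem (show ξ ∈ Set.Iio α from hξ))
        exact interior_maximal hVB hVopen
      ext x
      simp only [Set.mem_inter_iff, Set.mem_empty_iff_false, iff_false, not_and]
      intro hxV hxW
      exact hxW.2 (h1 hxV)
    -- B ξ ∩ closure W is nowhere dense
    have hnd : ∀ ξ < α, interior (B ξ ∩ closure W) = ∅ := by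
      intro ξ hξ
      by_contra hne0
      obtain ⟨x, hx⟩ := Set.nonempty_iff_ne_empty.2 hne0
      have hxcl : x ∈ closure W := (interior_subset hx).2
      have hVW : (interior (B ξ ∩ closure W) ∩ W).Nonempty :=
        mem_closure_iff.1 hxcl _ isOpen_interior hx
      rw [hkey ξ hξ _ isOpen_interior (fun a ha => (interior_subset ha).1)] at hVW
      exact Set.not_nonempty_empty hVW
    -- W \ B ξ is nonempty
    have hne' : ∀ ξ < α, (W \ B ξ).Nonempty := by
      intro ξ hξ
      rw [Set.nonempty_iff_ne_empty]
      intro h0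
      have hWB : W ⊆ B ξ := Set.diff_eq_empty.1 h0
      have := hkey ξ hξ W hWopen hWB
      rw [Set.inter_self] at this
      exact Set.not_nonempty_empty (this ▸ hWne)
    -- cofinality setup
    have hκreg : (α.cof).IsRegular := Cardinal.isRegular_cof hα
    obtain ⟨f, hf⟩ := Ordinal.exists_fundamental_sequence α
    have hflt : ∀ j (hj : j < α.cof.ord), f j hj < α := fun j hj => hf.lt hj
    have hcofinal : ∀ η < α, ∃ j, ∃ hj : j < α.cof.ord, η ≤ f j hj := by
      intro η hη
      have := hf.blsub_eq
      rw [← this] at hη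
      exact Ordinal.lt_blsub_iff.1 hη
    rcases eq_or_lt_of_le hκreg.aleph0_le with hωκ | hωκ
    · -- countable cofinality : use the Baire property
      have hωord : (Ordinal.omega0 : Ordinal) = α.cof.ord := by
        rw [← hωκ, Cardinal.ord_aleph0]
      have hnat : ∀ k : ℕ, (k : Ordinal) < α.cof.ord := fun k =>
        hωord ▸ Ordinal.nat_lt_omega0 k
      set g : ℕ → Ordinal := fun k => f k (hnat k) with hg
      have hgα : ∀ k, g k < α := fun k => hflt _ _
      set G : ℕ → Set (∀ t, X t) := fun k => (B (g k) ∩ closure W)ᶜ with hG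
      have hGopen : ∀ k, IsOpen (G k) := fun k =>
        ((hBcl _ (hgα k)).inter isClosed_closure).isOpen_compl
      have hGdense : ∀ k, Dense (G k) := fun k =>
        interior_eq_empty_iff_dense_compl.1 (hnd _ (hgα k))
      have hd : Dense (⋂ k, G k) := dense_iInter_of_isOpen_nat hGopen hGdense
      obtain ⟨y, hyW, hyG⟩ := hd.inter_open_nonempty W hWopen hWne
      obtain ⟨η, hη, hyA⟩ := Set.mem_iUnion₂.1 (hWsub hyW)
      obtain ⟨j, hj, hjη⟩ := hcofinal η hη
      obtain ⟨k, rfl⟩ := Ordinal.lt_omega0.1 (hωord ▸ hj)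
      have hyB : y ∈ B (g k) :=
        hAB _ (hgα k) (hAmono η _ hjη (hgα k) hyA)
      have := Set.mem_iInter.1 hyG k
      exact this ⟨hyB, subset_closure hyW⟩
    · -- uncountable cofinality : use the caliber property
      set ι := (α.cof.ord).ToType with hι
      have hικ : (α.cof : Cardinal) ≤ #ι := by
        rw [hι, Cardinal.mk_toType, Cardinal.card_ord]
      set eIso := (Ordinal.ToType.mk (o := α.cof.ord)) with heIso
      set ξf : ι → Ordinal := fun i => (eIso.symm i).1 with hξf
      have hξlt : ∀ i, ξf i < α.cof.ord := fun i => (eIso.symm i).2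
      set g : ι → Ordinal := fun i => f (ξf i) (hξlt i) with hg
      have hgα : ∀ i, g i < α := fun i => hflt _ _
      set Uf : ι → Set (∀ t, X t) := fun i => W \ B (g i) with hUf
      have hUopen : ∀ i, IsOpen (Uf i) := fun i => hWopen.sdiff (hBcl _ (hgα i))
      have hUne : ∀ i, (Uf i).Nonempty := fun i => hne' _ (hgα i)
      obtain ⟨S, hSκ, ⟨y, hy⟩⟩ := caliber_pi hκreg hωκ hικ Uf hUopen hUne
      have hymem : ∀ i ∈ S, y ∈ Uf i := fun i hi => Set.mem_iInter₂.1 hy i hi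
      have hSne : S.Nonempty := by
        rw [Set.nonempty_iff_ne_empty]
        intro h0
        rw [h0, Cardinal.mk_emptyCollection] at hSκ
        exact absurd (lt_of_lt_of_le (aleph0_pos.trans hωκ) hSκ) (lt_irrefl 0)
      obtain ⟨i₁, hi₁⟩ := hSne
      have hyW : y ∈ W := (hymem i₁ hi₁).1
      obtain ⟨η, hη, hyA⟩ := Set.mem_iUnion₂.1 (hWsub hyW)
      obtain ⟨j, hj, hjη⟩ := hcofinal η hη
      -- find i ∈ S with j ≤ ξf i
      have hex : ∃ i ∈ S, j ≤ ξf i := by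
        by_contra hcon2
        push_neg at hcon2
        have hinj : Function.Injective
            (fun i : S => (Ordinal.ToType.mk (o := j)) ⟨ξf i.1, hcon2 i.1 i.2⟩) := by
          intro a b hab
          have h1 : ξf a.1 = ξf b.1 :=
            Subtype.mk_eq_mk.1 (((Ordinal.ToType.mk (o := j))).injective hab)
          have h2 : eIso.symm a.1 = eIso.symm b.1 := Subtype.ext h1
          exact Subtype.ext (eIso.symm.injective h2)
        have hle : #S ≤ #(j.ToType) := Cardinal.mk_le_of_injective hinj
        rw [Cardinal.mk_toType] at hle
        have hjcard : j.card < α.cof := Cardinal.lt_ord.1 hj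
        exact absurd (hSκ.trans hle) (not_le.2 hjcard)
      obtain ⟨i, hiS, hji⟩ := hex
      have hfle : f j hj ≤ g i := hf.monotone hj (hξlt i) hji
      have hyB : y ∈ B (g i) :=
        hAB _ (hgα i) (hAmono η _ (hjη.trans hfle) (hgα i) hyA)
      exact (hymem i hiS).2 hyB
end

section
/- Let X be a strongly Baire space, Y a topological space, and f : X → Y a continuous surjection such that the preimage of every nowhere dense subset of Y is nowhere dense in X. Then Y is a strongly Baire space. -/
universe u v

lemma aux_int_preimage {X : Type u} {Y : Type v} [TopologicalSpace X] [TopologicalSpace Y]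
    (f : X → Y) (_hf : Continuous f)
    (hnwd : ∀ B : Set Y, IsNowhereDense B → IsNowhereDense (f ⁻¹' B))
    (B : Set Y) (hB : IsClosed B) :
    interior (f ⁻¹' B) ⊆ closure (f ⁻¹' (interior B)) := by
  set N : Set Y := B \ interior B with hN
  have hNc : IsClosed N := hB.sdiff isOpen_interior
  have hNint : interior N = ∅ := by
    apply Set.eq_empty_iff_forall_notMem.2
    intro x hx
    exact (interior_subset hx).2 (interior_mono Set.diff_subset hx)
  have hMnd : IsNowhereDense (f ⁻¹' N) := by
    apply hnwd N
    unfold IsNowhereDense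
    rw [hNc.closure_eq, hNint]
  intro x hx
  rw [mem_closure_iff]
  intro o ho hxo
  set W := o ∩ interior (f ⁻¹' B) with hW
  have hWo : IsOpen W := ho.inter isOpen_interior
  have hxW : x ∈ W := ⟨hxo, hx⟩
  have hns : ¬ W ⊆ closure (f ⁻¹' N) := by
    intro h
    have : W ⊆ interior (closure (f ⁻¹' N)) := interior_maximal h hWo
    rw [hMnd] at this
    exact this hxW
  obtain ⟨z, hzW, hzN⟩ := Set.not_subset.1 hns
  refine ⟨z, hzW.1, ?_⟩
  have hzB : z ∈ f ⁻¹' B := interior_subset hzW.2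
  have hfzN : f z ∉ N := fun h => hzN (subset_closure h)
  simp only [hN, Set.mem_diff, not_and, not_not] at hfzN
  exact hfzN hzB

def StronglyBaire' (Y : Type v) [TopologicalSpace Y] : Prop :=
  ∀ (α : Ordinal.{v}) (A B : Ordinal.{v} → Set Y),
    (∀ ξ < α, IsClosed (A ξ)) → (∀ ξ < α, IsClosed (B ξ)) →
    (∀ ξ η, ξ ≤ η → η < α → A ξ ⊆ A η) →
    (∀ ξ η, ξ ≤ η → η < α → B ξ ⊆ B η) →
    (∀ ξ < α, A ξ ⊆ B ξ) →
    (∀ β, Order.IsSuccLimit β → β < α → A β ⊆ ⋃ ξ ∈ Set.Iio β, B ξ) →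
    interior (⋃ ξ ∈ Set.Iio α, A ξ) ⊆ closure (⋃ ξ ∈ Set.Iio α, interior (B ξ))

/-- The image of a strongly Baire space under a continuous surjection pulling back
nowhere dense sets to nowhere dense sets is strongly Baire. -/
theorem stronglyBaire_image (X : Type u) (Y : Type v) [TopologicalSpace X]
    [TopologicalSpace Y] (hX : StronglyBaire X) (f : X → Y) (hf : Continuous f)
    (hsurj : Function.Surjective f)
    (hnwd : ∀ B : Set Y, IsNowhereDense B → IsNowhereDense (f ⁻¹' B)) :
    StronglyBaire' Y := by
  intro α A B hAc hBc hAm hBm hAB hlim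
  -- the pullback pairs
  set p : Ordinal.{v} → Set X × Set X := fun ξ => (f ⁻¹' A ξ, f ⁻¹' B ξ) with hp
  have hpmono : ∀ ξ η, ξ ≤ η → η < α → p ξ ≤ p η := fun ξ η hle hη =>
    ⟨Set.preimage_mono (hAm ξ η hle hη), Set.preimage_mono (hBm ξ η hle hη)⟩
  set S : Set (Set X × Set X) := {s | ∃ ξ, ξ < α ∧ p ξ = s} with hS
  -- the minimal index realizing an element of S
  set φ : ↥S → Ordinal.{v} := fun s => sInf {ξ | ξ < α ∧ p ξ = s} with hφ
  have hφspec : ∀ s : ↥S, φ s < α ∧ p (φ s) = (s : Set X × Set X) := by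
    intro s
    obtain ⟨ξ, hξ, hpe⟩ := s.2
    exact csInf_mem (⟨ξ, hξ, hpe⟩ : {ξ | ξ < α ∧ p ξ = (s : Set X × Set X)}.Nonempty)
  have hφmin : ∀ (s : ↥S) (ξ : Ordinal.{v}), ξ < α → p ξ = (s : Set X × Set X) → φ s ≤ ξ :=
    fun s ξ hξ hpe => csInf_le' ⟨hξ, hpe⟩
  have hφinj : Function.Injective φ := by
    intro s t h
    have h2 := (hφspec s).2
    rw [h, (hφspec t).2] at h2
    exact Subtype.ext h2.symm
  -- the well-order on S
  set r : ↥S → ↥S → Prop := fun s t => φ s < φ t with hr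
  haveI htri : IsTrichotomous ↥S r := by
    constructor
    intro s t h1 h2
    rcases lt_trichotomy (φ s) (φ t) with h | h | h
    · exact absurd h h1
    · exact hφinj h
    · exact absurd h h2
  haveI htrans : IsTrans ↥S r := ⟨fun s t u h1 h2 => lt_trans h1 h2⟩
  haveI hwf : IsWellFounded ↥S r := ⟨InvImage.wf φ Ordinal.lt_wf⟩
  haveI hwo : IsWellOrder ↥S r := { }
  set α' : Ordinal.{u} := Ordinal.type r with hα'
  set A' : Ordinal.{u} → Set X := fun γ =>
    if h : γ < α' then ((Ordinal.enum r ⟨γ, h⟩ : ↥S) : Set X × Set X).1 else ∅ with hA'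
  set B' : Ordinal.{u} → Set X := fun γ =>
    if h : γ < α' then ((Ordinal.enum r ⟨γ, h⟩ : ↥S) : Set X × Set X).2 else ∅ with hB'
  have hA'eq : ∀ γ (h : γ < α'), A' γ = f ⁻¹' A (φ (Ordinal.enum r ⟨γ, h⟩)) := by
    intro γ h
    have h2 := (hφspec (Ordinal.enum r ⟨γ, h⟩)).2
    simp only [hA', dif_pos h, ← h2]
    rfl
  have hB'eq : ∀ γ (h : γ < α'), B' γ = f ⁻¹' B (φ (Ordinal.enum r ⟨γ, h⟩)) := by
    intro γ h
    have h2 := (hφspec (Ordinal.enum r ⟨γ, h⟩)).2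
    simp only [hB', dif_pos h, ← h2]
    rfl
  have henum_le : ∀ {γ γ'} (h : γ ≤ γ') (h' : γ' < α'),
      φ (Ordinal.enum r ⟨γ, lt_of_le_of_lt h h'⟩) ≤ φ (Ordinal.enum r ⟨γ', h'⟩) := by
    intro γ γ' h h'
    rcases eq_or_lt_of_le h with rfl | hlt
    · exact le_rfl
    · exact le_of_lt ((Ordinal.enum_lt_enum (r := r)).2 (Subtype.mk_lt_mk.2 hlt))
  -- apply strong Baireness of X
  have key := hX α' A' B' ?_ ?_ ?_ ?_ ?_ ?_
  rotate_left
  · intro γ h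
    rw [hA'eq γ h]
    exact ((hAc _ (hφspec _).1).preimage hf)
  · intro γ h
    rw [hB'eq γ h]
    exact ((hBc _ (hφspec _).1).preimage hf)
  · intro γ γ' hle h'
    rw [hA'eq γ (lt_of_le_of_lt hle h'), hA'eq γ' h']
    exact Set.preimage_mono (hAm _ _ (henum_le hle h') (hφspec _).1)
  · intro γ γ' hle h'
    rw [hB'eq γ (lt_of_le_of_lt hle h'), hB'eq γ' h']
    exact Set.preimage_mono (hBm _ _ (henum_le hle h') (hφspec _).1)
  · intro γ h
    rw [hA'eq γ h, hB'eq γ h]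
    exact Set.preimage_mono (hAB _ (hφspec _).1)
  · -- the limit condition
    intro β hβ hβα'
    set s : ↥S := Ordinal.enum r ⟨β, hβα'⟩ with hs
    set ξβ : Ordinal.{v} := φ s with hξβ
    have hξβα : ξβ < α := (hφspec s).1
    -- for any η < ξβ, the pair p η appears strictly before s
    have haux : ∀ η, η < ξβ → ∃ t : ↥S, (t : Set X × Set X) = p η ∧ r t s := by
      intro η hη
      have hηα : η < α := lt_trans hη hξβα
      exact ⟨⟨p η, η, hηα, rfl⟩, rfl, lt_of_le_of_lt (hφmin _ η hηα rfl) hη⟩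
    have hξβlim : Order.IsSuccLimit ξβ := by
      rw [Ordinal.isSuccLimit_iff, Order.isSuccPrelimit_iff_succ_lt]
      constructor
      · -- ξβ ≠ 0
        intro h0
        have h0β : (0 : Ordinal.{u}) < β := (by rw [← Ordinal.bot_eq_zero]; exact hβ.bot_lt)
        have h0α' : (0 : Ordinal.{u}) < α' := lt_trans h0β hβα'
        have : r (Ordinal.enum r ⟨0, h0α'⟩) s :=
          (Ordinal.enum_lt_enum (r := r)).2 (Subtype.mk_lt_mk.2 h0β)
        have : φ (Ordinal.enum r ⟨0, h0α'⟩) < ξβ := this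
        rw [h0] at this
        exact not_lt_zero this
      · -- η < ξβ → succ η < ξβ
        intro η hη
        have hηα : η < α := lt_trans hη hξβα
        obtain ⟨t, htp, hts⟩ := haux η hη
        have hγt : Ordinal.typein r t < β := by
          have := (Ordinal.typein_lt_typein r).2 hts
          rwa [Ordinal.typein_enum] at this
        have hγt1 : Ordinal.typein r t + 1 < β := by rw [Ordinal.add_one_eq_succ]; exact hβ.succ_lt hγt
        have hγt1α' : Ordinal.typein r t + 1 < α' := lt_trans hγt1 hβα'
        set s'' : ↥S := Ordinal.enum r ⟨Ordinal.typein r t + 1, hγt1α'⟩ with hs''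
        have hts'' : r t s'' := by
          have : t = Ordinal.enum r ⟨Ordinal.typein r t, Ordinal.typein_lt_type r t⟩ :=
            (Ordinal.enum_typein r t).symm
          rw [this]
          exact (Ordinal.enum_lt_enum (r := r)).2 (Subtype.mk_lt_mk.2 (lt_add_one _))
        have hs''s : r s'' s := (Ordinal.enum_lt_enum (r := r)).2 (Subtype.mk_lt_mk.2 hγt1)
        -- η < φ s''
        have hηs'' : η < φ s'' := by
          by_contra hc
          push_neg at hc
          have h1 : (s'' : Set X × Set X) ≤ (t : Set X × Set X) := by
            rw [htp, ← (hφspec s'').2]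
            exact hpmono _ _ hc hηα
          have h2 : (t : Set X × Set X) ≤ (s'' : Set X × Set X) := by
            rw [← (hφspec s'').2, ← (hφspec t).2]
            exact hpmono _ _ (le_of_lt hts'') (hφspec s'').1
          have : t = s'' := Subtype.ext (le_antisymm h2 h1)
          rw [this] at hts''
          exact lt_irrefl _ hts''
        calc Order.succ η ≤ φ s'' := Order.succ_le_of_lt hηs''
          _ < ξβ := hs''s
    -- now prove the inclusion
    intro x hx
    rw [hA'eq β hβα'] at hx
    have hx2 : f x ∈ ⋃ ξ ∈ Set.Iio ξβ, B ξ := hlim ξβ hξβlim hξβα hx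
    simp only [Set.mem_iUnion, Set.mem_Iio, exists_prop] at hx2
    obtain ⟨ξ, hξ, hxB⟩ := hx2
    obtain ⟨t, htp, hts⟩ := haux ξ hξ
    have hγt : Ordinal.typein r t < β := by
      have := (Ordinal.typein_lt_typein r).2 hts
      rwa [Ordinal.typein_enum] at this
    refine Set.mem_biUnion (Set.mem_Iio.mpr hγt) ?_
    have hB't : B' (Ordinal.typein r t) = (t : Set X × Set X).2 := by
      simp only [hB', dif_pos (Ordinal.typein_lt_type r t), Ordinal.enum_typein]
      exact dif_pos (Ordinal.typein_lt_type r t)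
    rw [hB't, htp]
    exact hxB
  -- translate the conclusion back to Y
  have hUA : f ⁻¹' (⋃ ξ ∈ Set.Iio α, A ξ) = ⋃ γ ∈ Set.Iio α', A' γ := by
    ext x
    simp only [Set.mem_preimage, Set.mem_iUnion, Set.mem_Iio, exists_prop]
    constructor
    · rintro ⟨ξ, hξ, hxA⟩
      set t : ↥S := ⟨p ξ, ξ, hξ, rfl⟩ with ht
      refine ⟨Ordinal.typein r t, Ordinal.typein_lt_type r t, ?_⟩
      have : A' (Ordinal.typein r t) = (t : Set X × Set X).1 := by
        simp only [hA', dif_pos (Ordinal.typein_lt_type r t), Ordinal.enum_typein]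
        exact dif_pos (Ordinal.typein_lt_type r t)
      rw [this]
      exact hxA
    · rintro ⟨γ, hγ, hxA⟩
      rw [hA'eq γ hγ] at hxA
      exact ⟨_, (hφspec _).1, hxA⟩
  have hBcl : (⋃ γ ∈ Set.Iio α', interior (B' γ)) ⊆
      closure (f ⁻¹' (⋃ ξ ∈ Set.Iio α, interior (B ξ))) := by
    intro x hx
    simp only [Set.mem_iUnion, Set.mem_Iio, exists_prop] at hx
    obtain ⟨γ, hγ, hxB⟩ := hx
    rw [hB'eq γ hγ] at hxB
    have h1 := aux_int_preimage f hf hnwd _ (hBc _ (hφspec (Ordinal.enum r ⟨γ, hγ⟩)).1) hxB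
    refine closure_mono ?_ h1
    apply Set.preimage_mono
    intro w hw
    exact Set.mem_biUnion (Set.mem_Iio.mpr (hφspec (Ordinal.enum r ⟨γ, hγ⟩)).1) hw
  have key2 : interior (f ⁻¹' (⋃ ξ ∈ Set.Iio α, A ξ)) ⊆
      closure (f ⁻¹' (⋃ ξ ∈ Set.Iio α, interior (B ξ))) := by
    rw [hUA]
    refine key.trans ?_
    calc closure (⋃ γ ∈ Set.Iio α', interior (B' γ))
        ⊆ closure (closure (f ⁻¹' (⋃ ξ ∈ Set.Iio α, interior (B ξ)))) := closure_mono hBcl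
      _ = closure (f ⁻¹' (⋃ ξ ∈ Set.Iio α, interior (B ξ))) := closure_closure
  -- finish
  intro y hy
  rw [mem_closure_iff]
  intro o ho hyo
  obtain ⟨x, rfl⟩ := hsurj y
  have hxo : x ∈ f ⁻¹' o ∩ f ⁻¹' (interior (⋃ ξ ∈ Set.Iio α, A ξ)) := ⟨hyo, hy⟩
  have hopen : IsOpen (f ⁻¹' o ∩ f ⁻¹' (interior (⋃ ξ ∈ Set.Iio α, A ξ))) :=
    (ho.preimage hf).inter (isOpen_interior.preimage hf)
  have hsub : f ⁻¹' o ∩ f ⁻¹' (interior (⋃ ξ ∈ Set.Iio α, A ξ)) ⊆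
      f ⁻¹' (⋃ ξ ∈ Set.Iio α, A ξ) :=
    Set.inter_subset_right.trans (Set.preimage_mono interior_subset)
  have hxint : x ∈ interior (f ⁻¹' (⋃ ξ ∈ Set.Iio α, A ξ)) :=
    interior_maximal hsub hopen hxo
  have hxcl := key2 hxint
  rw [mem_closure_iff] at hxcl
  obtain ⟨z, hz1, hz2⟩ := hxcl (f ⁻¹' o) (ho.preimage hf) hyo
  exact ⟨f z, hz1, hz2⟩
end

section
/- Every strongly Baire space is a Baire space. -/
universe u

lemma interior_union_empty {X : Type u} [TopologicalSpace X] {s t : Set X}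
    (hs : IsClosed s) (his : interior s = ∅) (hit : interior t = ∅) :
    interior (s ∪ t) = ∅ := by
  have h1 : interior (s ∪ t) \ s ⊆ interior t := by
    apply interior_maximal
    · intro x hx
      rcases (interior_subset hx.1) with h | h
      · exact absurd h hx.2
      · exact h
    · exact isOpen_interior.sdiff hs
  rw [hit, Set.subset_empty_iff, Set.diff_eq_empty] at h1
  have h2 : interior (s ∪ t) ⊆ interior s := interior_maximal h1 isOpen_interior
  rw [his, Set.subset_empty_iff] at h2
  exact h2

/-- Every strongly Baire space is a Baire space. -/
theorem baireSpace_of_stronglyBaire (X : Type u) [TopologicalSpace X]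
    (h : StronglyBaire X) : BaireSpace X := by
  constructor
  intro f hopen hdense
  set g : ℕ → Set X := fun n => ⋃ k ∈ Set.Iic n, (f k)ᶜ with hg
  have hgclosed : ∀ n, IsClosed (g n) := fun n =>
    (Set.finite_Iic n).isClosed_biUnion (fun k _ => (hopen k).isClosed_compl)
  have hgmono : ∀ m n : ℕ, m ≤ n → g m ⊆ g n := by
    intro m n hmn
    exact Set.biUnion_subset_biUnion_left (Set.Iic_subset_Iic.mpr hmn)
  have hgint : ∀ n, interior (g n) = ∅ := by
    intro n
    induction n with
    | zero =>
      have : g 0 = (f 0)ᶜ := by simp [hg]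
      rw [this, interior_compl, Set.compl_empty_iff]
      exact (hdense 0).closure_eq
    | succ n ih =>
      have : g (n + 1) = g n ∪ (f (n + 1))ᶜ := by
        ext x
        simp only [hg, Set.mem_iUnion, Set.mem_Iic, Set.mem_union, Nat.le_add_one_iff,
          exists_prop]
        constructor
        · rintro ⟨k, hk | rfl, hx⟩
          · exact Or.inl ⟨k, hk, hx⟩
          · exact Or.inr hx
        · rintro (⟨k, hk, hx⟩ | hx)
          · exact ⟨k, Or.inl hk, hx⟩
          · exact ⟨n + 1, Or.inr rfl, hx⟩
      rw [this]
      apply interior_union_empty (hgclosed n) ih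
      rw [interior_compl, Set.compl_empty_iff]
      exact (hdense (n + 1)).closure_eq
  set A : Ordinal.{u} → Set X := fun ξ => ⋃ n ∈ {n : ℕ | (n : Ordinal.{u}) = ξ}, g n with hA
  have hAn : ∀ n : ℕ, A (n : Ordinal.{u}) = g n := by
    intro n
    apply subset_antisymm
    · apply Set.iUnion₂_subset
      intro m hm
      have : m = n := Nat.cast_injective hm
      rw [this]
    · exact Set.subset_biUnion_of_mem rfl
  have hA' : ∀ ξ < Ordinal.omega0, ∃ n : ℕ, ξ = n := fun ξ hξ => Ordinal.lt_omega0.mp hξ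
  have key := h Ordinal.omega0 A A
    (by intro ξ hξ; obtain ⟨n, rfl⟩ := hA' ξ hξ; rw [hAn]; exact hgclosed n)
    (by intro ξ hξ; obtain ⟨n, rfl⟩ := hA' ξ hξ; rw [hAn]; exact hgclosed n)
    (by
      intro ξ η hle hη
      obtain ⟨n, rfl⟩ := hA' η hη
      obtain ⟨m, rfl⟩ := hA' ξ (lt_of_le_of_lt hle hη)
      rw [hAn, hAn]
      exact hgmono m n (by exact_mod_cast hle))
    (by
      intro ξ η hle hη
      obtain ⟨n, rfl⟩ := hA' η hη
      obtain ⟨m, rfl⟩ := hA' ξ (lt_of_le_of_lt hle hη)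
      rw [hAn, hAn]
      exact hgmono m n (by exact_mod_cast hle))
    (fun ξ _ => subset_rfl)
    (by
      intro β hβ hβω
      exact absurd (Ordinal.omega0_le_of_isSuccLimit hβ) (not_le.mpr hβω))
  have hU : ⋃ ξ ∈ Set.Iio Ordinal.omega0, A ξ = ⋃ n : ℕ, (f n)ᶜ := by
    apply subset_antisymm
    · apply Set.iUnion₂_subset
      intro ξ hξ
      obtain ⟨n, rfl⟩ := hA' ξ hξ
      rw [hAn]
      exact Set.iUnion₂_subset fun k _ => Set.subset_iUnion (fun m => (f m)ᶜ) k
    · apply Set.iUnion_subset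
      intro n
      have h1 : (f n)ᶜ ⊆ A (n : Ordinal.{u}) := by
        rw [hAn]
        show (f n)ᶜ ⊆ ⋃ k ∈ Set.Iic n, (f k)ᶜ
        exact Set.subset_biUnion_of_mem (u := fun k => (f k)ᶜ) (Set.mem_Iic.mpr (le_refl n))
      exact h1.trans (Set.subset_biUnion_of_mem (Ordinal.nat_lt_omega0 n))
  have hint : ⋃ ξ ∈ Set.Iio Ordinal.omega0, interior (A ξ) = ∅ := by
    apply Set.eq_empty_iff_forall_notMem.mpr
    intro x hx
    obtain ⟨ξ, hξ, hxξ⟩ := Set.mem_iUnion₂.mp hx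
    obtain ⟨n, rfl⟩ := hA' ξ hξ
    rw [hAn, hgint] at hxξ
    exact hxξ
  rw [hU, hint, closure_empty, Set.subset_empty_iff] at key
  have : (⋂ n, f n)ᶜ = ⋃ n : ℕ, (f n)ᶜ := by simp [Set.compl_iInter]
  rw [← this, interior_compl, Set.compl_empty_iff] at key
  rw [dense_iff_closure_eq]
  exact key
end

section
/- Let Y be a compact Hausdorff space such that for every subset B ⊆ Y with |B| ≤ ℵ₁, the closure of B is metrizable. Then Y is metrizable. -/
open Cardinal

universe u

section Aux

variable {Y : Type u} [TopologicalSpace Y] [Nonempty Y]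

open Classical in
/-- Pick a point outside the closure of `S`, if possible. -/
noncomputable def pickOutside (S : Set Y) : Y :=
  if h : ∃ y, y ∉ closure S then h.choose else Classical.arbitrary Y

lemma pickOutside_spec {S : Set Y} (h : closure S ≠ Set.univ) :
    pickOutside S ∉ closure S := by
  have h' : ∃ y, y ∉ closure S := by
    rcases (Set.ne_univ_iff_exists_notMem _).mp h with ⟨y, hy⟩
    exact ⟨y, hy⟩
  rw [pickOutside, dif_pos h']
  exact h'.choose_spec

/-- A transfinite sequence where each point avoids the closure of the previous ones
(whenever possible). -/
noncomputable def fseq : Ordinal.{u} → Y :=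
  Ordinal.lt_wf.fix fun α ih => pickOutside {y | ∃ β, ∃ h : β < α, ih β h = y}

lemma fseq_eq (α : Ordinal.{u}) :
    fseq (Y := Y) α = pickOutside (fseq '' Set.Iio α) := by
  show Ordinal.lt_wf.fix _ α = _
  rw [WellFounded.fix_eq]
  congr 1
  ext y
  simp only [Set.mem_setOf_eq, Set.mem_image, Set.mem_Iio]
  constructor
  · rintro ⟨β, h, rfl⟩; exact ⟨β, h, rfl⟩
  · rintro ⟨β, h, rfl⟩; exact ⟨β, h, rfl⟩

end Aux

/-- A compact Hausdorff space all of whose subsets of cardinality at most `ℵ₁` have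
metrizable closure is metrizable. -/
theorem metrizable_of_small_closures (Y : Type u) [TopologicalSpace Y] [CompactSpace Y]
    [T2Space Y]
    (h : ∀ B : Set Y, #B ≤ Cardinal.aleph 1 → TopologicalSpace.MetrizableSpace (closure B)) :
    TopologicalSpace.MetrizableSpace Y := by
  -- Step 1: `Y` is separable.
  have hsep : ∃ D : Set Y, D.Countable ∧ Dense D := by
    by_contra hns
    push_neg at hns
    have hns' : ∀ S : Set Y, S.Countable → closure S ≠ Set.univ := fun S hS hcl =>
      hns S hS (dense_iff_closure_eq.mpr hcl)
    have hne : Nonempty Y := by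
      by_contra hempty
      rw [not_nonempty_iff] at hempty
      exact hns' ∅ Set.countable_empty (by simp [Set.univ_eq_empty_iff.mpr hempty])
    set o₁ : Ordinal.{u} := (Cardinal.aleph 1).ord with ho₁
    -- images of initial segments are countable
    have hct : ∀ α < o₁, (fseq (Y := Y) '' Set.Iio α).Countable := by
      intro α hα
      apply Set.Countable.image
      rw [countable_iff_lt_aleph_one, Ordinal.mk_Iio_ordinal]
      have h1 : Cardinal.lift.{u+1} α.card < Cardinal.lift.{u+1} (Cardinal.aleph 1) :=
        Cardinal.lift_lt.mpr (Cardinal.lt_ord.mp hα)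
      rwa [Cardinal.lift_aleph, Ordinal.lift_one] at h1
    have hnotin : ∀ α < o₁, fseq (Y := Y) α ∉ closure (fseq '' Set.Iio α) := by
      intro α hα
      rw [fseq_eq]
      exact pickOutside_spec (hns' _ (hct α hα))
    set T : Set Y := fseq '' Set.Iio o₁ with hT
    have hTcard : #T ≤ Cardinal.aleph 1 := by
      have h1 := Cardinal.mk_image_le_lift (f := fseq (Y := Y)) (s := Set.Iio o₁)
      rw [Ordinal.mk_Iio_ordinal, Cardinal.card_ord, Cardinal.lift_lift] at h1
      rw [← Cardinal.lift_le.{u+1}]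
      exact h1
    haveI hZmet : TopologicalSpace.MetrizableSpace ↥(closure T) := h T hTcard
    haveI : CompactSpace ↥(closure T) := isCompact_iff_compactSpace.mp isClosed_closure.isCompact
    letI : MetricSpace ↥(closure T) := TopologicalSpace.metrizableSpaceMetric _
    haveI : SecondCountableTopology ↥(closure T) := inferInstance
    set TZ : Set ↥(closure T) := Subtype.val ⁻¹' T with hTZ
    haveI : TopologicalSpace.SeparableSpace ↥TZ := inferInstance
    obtain ⟨u, ucnt, udense⟩ := TopologicalSpace.exists_countable_dense ↥TZ
    have hidx : ∀ d : ↥TZ, ∃ β, β < o₁ ∧ fseq β = ((d : ↥(closure T)) : Y) := by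
      intro d
      obtain ⟨β, hβ, hb⟩ := d.2
      exact ⟨β, hβ, hb⟩
    choose idx hidx1 hidx2 using hidx
    haveI : Countable ↥u := ucnt.to_subtype
    have hsup : (⨆ d : ↥u, idx ↑d) < o₁ := by
      apply Ordinal.iSup_lt_ord_lift
      · rw [Cardinal.isRegular_aleph_one.cof_eq]
        exact (Cardinal.lift_le.mpr (Cardinal.mk_le_aleph0_iff.mpr inferInstance)).trans_lt
          (by rw [Cardinal.lift_aleph0]; exact Cardinal.aleph0_lt_aleph_one)
      · exact fun d => hidx1 _
    set β₀ : Ordinal.{u} := ⨆ d : ↥u, idx ↑d with hβ₀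
    have hβ : β₀ + 1 < o₁ := by
      rw [Ordinal.add_one_eq_succ]
      exact (Cardinal.isSuccLimit_ord (Cardinal.aleph0_le_aleph 1)).succ_lt hsup
    have hfβ : fseq (β₀ + 1) ∈ T := ⟨β₀ + 1, hβ, rfl⟩
    have hcl : fseq (β₀ + 1) ∈ closure T := subset_closure hfβ
    set p : ↥TZ := ⟨⟨fseq (β₀ + 1), hcl⟩, hfβ⟩ with hp0
    have hp : p ∈ closure u := udense p
    rw [closure_subtype] at hp
    rw [closure_subtype] at hp
    have hsub : (Subtype.val '' (Subtype.val '' u) : Set Y) ⊆ fseq '' Set.Iio (β₀ + 1) := by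
      rintro y ⟨z, ⟨d, hd, rfl⟩, rfl⟩
      refine ⟨idx d, ?_, hidx2 d⟩
      have : idx d ≤ β₀ := Ordinal.le_iSup (fun e : ↥u => idx ↑e) ⟨d, hd⟩
      exact lt_of_le_of_lt this (lt_add_one β₀)
    exact hnotin (β₀ + 1) hβ (closure_mono hsub hp)
  -- Step 2: conclude.
  obtain ⟨D, Dcnt, Ddense⟩ := hsep
  have hDcard : #D ≤ Cardinal.aleph 1 := by
    have : #D ≤ ℵ₀ := Cardinal.mk_le_aleph0_iff.mpr Dcnt.to_subtype
    exact this.trans (Cardinal.aleph0_le_aleph 1)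
  haveI := h D hDcard
  have hcl : closure D = Set.univ := Ddense.closure_eq
  have e : ↥(closure D) ≃ₜ Y := hcl ▸ Homeomorph.Set.univ Y
  exact e.symm.isEmbedding.metrizableSpace
end

section
/- Let X be a Baire space with the countable chain condition that is a Namioka space, and let Y ⊆ C_p(X) be compact. Then there exists an at most countable set A ⊆ X such that distinct elements of Y differ at some point of A; consequently Y is metrizable. -/
universe u

/-- `X` is a Namioka space: `X` is Baire and for every compact space `K` and every
separately continuous `f : X × K → ℝ` there is a dense `G_δ` set `A ⊆ X` with `A × K`
contained in the set of joint continuity points of `f`. -/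
def NamiokaSpace (X : Type u) [TopologicalSpace X] : Prop :=
  BaireSpace X ∧
  ∀ (K : Type u) [TopologicalSpace K] [CompactSpace K] (f : X → K → ℝ),
    (∀ k, Continuous fun x => f x k) → (∀ x, Continuous (f x)) →
    ∃ A : Set X, Dense A ∧ IsGδ A ∧
      ∀ a ∈ A, ∀ k : K, ContinuousAt (fun p : X × K => f p.1 p.2) (a, k)

/-- `X` has the countable chain condition. -/
def CCC (X : Type u) [TopologicalSpace X] : Prop :=
  ∀ 𝒰 : Set (Set X), (∀ U ∈ 𝒰, IsOpen U ∧ U.Nonempty) →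
    𝒰.PairwiseDisjoint id → 𝒰.Countable

/-- For a Namioka Baire space `X` with the countable chain condition and a compact
`Y ⊆ C_p(X)`, there is a countable `A ⊆ X` separating the points of `Y`; consequently
`Y` is metrizable. -/
theorem metrizable_compact_subset_Cp (X : Type u) [TopologicalSpace X] [BaireSpace X]
    (hccc : CCC X) (hN : NamiokaSpace X) (Y : Set (X → ℝ))
    (hYcont : ∀ f ∈ Y, Continuous f) (hYcomp : IsCompact Y) :
    (∃ A : Set X, A.Countable ∧
      ∀ y ∈ Y, ∀ y' ∈ Y, y ≠ y' → ∃ a ∈ A, y a ≠ y' a)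
    ∧ TopologicalSpace.MetrizableSpace Y := by
  haveI : CompactSpace Y := isCompact_iff_compactSpace.mp hYcomp
  obtain ⟨-, hNam⟩ := hN
  obtain ⟨A₀, hA₀dense, -, hA₀⟩ := hNam (↥Y) (fun x y => (y : X → ℝ) x)
    (fun y => hYcont y y.2) (fun x => (continuous_apply x).comp continuous_subtype_val)
  -- Step 1: points of `A₀` have neighborhoods on which all `y ∈ Y` have small oscillation
  have small : ∀ a ∈ A₀, ∀ ε : ℝ, 0 < ε → ∃ N ∈ nhds a,
      ∀ y ∈ Y, ∀ x ∈ N, |y x - y a| < ε := by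
    intro a ha ε hε
    have hhalf : 0 < ε / 2 := by linarith
    have h1 : ∀ y : Y, ∃ u ∈ nhds a, ∃ v ∈ nhds y,
        ∀ p : X × ↥Y, p ∈ u ×ˢ v → |(p.2 : X → ℝ) p.1 - (y : X → ℝ) a| < ε / 2 := by
      intro y
      have hmem : (fun p : X × ↥Y => (p.2 : X → ℝ) p.1) ⁻¹'
          Metric.ball ((y : X → ℝ) a) (ε / 2) ∈ nhds ((a, y) : X × ↥Y) :=
        (hA₀ a ha y).preimage_mem_nhds (Metric.ball_mem_nhds _ hhalf)
      rw [mem_nhds_prod_iff] at hmem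
      obtain ⟨u, hu, v, hv, huv⟩ := hmem
      refine ⟨u, hu, v, hv, fun p hp => ?_⟩
      have := huv hp
      simpa [Metric.mem_ball, Real.dist_eq] using this
    choose u hu v hv hbound using h1
    obtain ⟨t, -, ht⟩ := isCompact_univ.elim_nhds_subcover v (fun y _ => hv y)
    refine ⟨⋂ y ∈ t, u y, (Filter.biInter_finset_mem t).mpr fun y _ => hu y, ?_⟩
    intro y₀ hy₀ x hx
    set z : ↥Y := ⟨y₀, hy₀⟩ with hz
    obtain ⟨y, hyt, hzv⟩ := Set.mem_iUnion₂.mp (ht (Set.mem_univ z))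
    have hxu : x ∈ u y := Set.mem_iInter₂.mp hx y hyt
    have hau : a ∈ u y := mem_of_mem_nhds (hu y)
    have h1 := hbound y (x, z) ⟨hxu, hzv⟩
    have h2 := hbound y (a, z) ⟨hau, hzv⟩
    calc |y₀ x - y₀ a| ≤ |y₀ x - (y : X → ℝ) a| + |(y : X → ℝ) a - y₀ a| := abs_sub_le _ _ _
      _ = |y₀ x - (y : X → ℝ) a| + |y₀ a - (y : X → ℝ) a| := by rw [abs_sub_comm ((y : X → ℝ) a)]
      _ < ε / 2 + ε / 2 := add_lt_add h1 h2
      _ = ε := by ring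
  -- Step 2: for each `ε > 0`, a countable set that `ε`-separates points of `Y`
  have key : ∀ ε : ℝ, 0 < ε → ∃ B : Set X, B.Countable ∧
      ∀ y ∈ Y, ∀ y' ∈ Y, (∀ b ∈ B, y b = y' b) → ∀ x, |y x - y' x| < ε := by
    intro ε hε
    set P : Set X → Prop := fun U => IsOpen U ∧ U.Nonempty ∧
      ∀ y ∈ Y, ∀ x ∈ U, ∀ x' ∈ U, |y x - y x'| < ε / 4 with hPdef
    set S : Set (Set (Set X)) := {𝒰 | (∀ U ∈ 𝒰, P U) ∧ 𝒰.PairwiseDisjoint id} with hSdef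
    obtain ⟨𝒰, h𝒰⟩ : ∃ 𝒰, Maximal (· ∈ S) 𝒰 := by
      apply zorn_subset
      intro c hcS hchain
      refine ⟨⋃₀ c, ⟨?_, ?_⟩, fun s hs => Set.subset_sUnion_of_mem hs⟩
      · rintro U ⟨𝒱, h𝒱, hU⟩
        exact (hcS h𝒱).1 U hU
      · rintro U ⟨𝒱, h𝒱c, hU⟩ V ⟨𝒲, h𝒲c, hV⟩ hUV
        rcases hchain.total h𝒱c h𝒲c with h | h
        · exact (hcS h𝒲c).2 (h hU) hV hUV
        · exact (hcS h𝒱c).2 hU (h hV) hUV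
    have hPall : ∀ U ∈ 𝒰, P U := h𝒰.prop.1
    have hdisj : 𝒰.PairwiseDisjoint id := h𝒰.prop.2
    -- every nonempty open set meets some member of the maximal family
    have meets : ∀ O : Set X, IsOpen O → O.Nonempty → ∃ U ∈ 𝒰, (U ∩ O).Nonempty := by
      intro O hO hOne
      obtain ⟨a, haO, haA⟩ := hA₀dense.inter_open_nonempty O hO hOne
      obtain ⟨N, hN, hNsmall⟩ := small a haA (ε / 8) (by linarith)
      set U₀ : Set X := interior N ∩ O with hU₀
      have haU₀ : a ∈ U₀ := ⟨mem_interior_iff_mem_nhds.mpr hN, haO⟩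
      have hPU₀ : P U₀ := by
        refine ⟨isOpen_interior.inter hO, ⟨a, haU₀⟩, ?_⟩
        intro y hy x hx x' hx'
        have h1 := hNsmall y hy x (interior_subset hx.1)
        have h2 := hNsmall y hy x' (interior_subset hx'.1)
        calc |y x - y x'| ≤ |y x - y a| + |y a - y x'| := abs_sub_le _ _ _
          _ = |y x - y a| + |y x' - y a| := by rw [abs_sub_comm (y a)]
          _ < ε / 8 + ε / 8 := add_lt_add h1 h2
          _ = ε / 4 := by ring
      by_contra hcon
      push_neg at hcon
      have hins : insert U₀ 𝒰 ∈ S := by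
        constructor
        · rintro U (rfl | hU)
          · exact hPU₀
          · exact hPall U hU
        · refine hdisj.insert fun U hU _ => ?_
          refine (Set.disjoint_right.mpr fun x hxU hxU₀ => ?_)
          have hxm : x ∈ U ∩ O := ⟨hxU, hxU₀.2⟩
          simp [hcon U hU] at hxm
      have hsub := h𝒰.2 hins (Set.subset_insert _ _)
      have ham : a ∈ U₀ ∩ O := ⟨haU₀, haO⟩
      simp [hcon U₀ (hsub (Set.mem_insert _ _))] at ham
    have h𝒰count : 𝒰.Countable :=
      hccc 𝒰 (fun U hU => ⟨(hPall U hU).1, (hPall U hU).2.1⟩) hdisj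
    have hpt : ∀ U : 𝒰, ∃ x, x ∈ (U : Set X) := fun U => (hPall U U.2).2.1
    choose pt hpt using hpt
    haveI := h𝒰count.to_subtype
    refine ⟨Set.range pt, Set.countable_range pt, ?_⟩
    intro y hy y' hy' hagree x
    have hquarter : (0 : ℝ) < ε / 4 := by linarith
    have hN : (y ⁻¹' Metric.ball (y x) (ε / 4)) ∩ (y' ⁻¹' Metric.ball (y' x) (ε / 4))
        ∈ nhds x :=
      Filter.inter_mem
        (((hYcont y hy).continuousAt).preimage_mem_nhds (Metric.ball_mem_nhds _ hquarter))
        (((hYcont y' hy').continuousAt).preimage_mem_nhds (Metric.ball_mem_nhds _ hquarter))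
    obtain ⟨U, hU𝒰, z, hzU, hzO⟩ := meets _ isOpen_interior
      ⟨x, mem_interior_iff_mem_nhds.mpr hN⟩
    have hz' := interior_subset hzO
    have hz1 : |y z - y x| < ε / 4 := by
      simpa [Metric.mem_ball, Real.dist_eq] using hz'.1
    have hz2 : |y' z - y' x| < ε / 4 := by
      simpa [Metric.mem_ball, Real.dist_eq] using hz'.2
    have ha : pt ⟨U, hU𝒰⟩ ∈ U := hpt ⟨U, hU𝒰⟩
    have ho1 : |y z - y (pt ⟨U, hU𝒰⟩)| < ε / 4 :=
      (hPall U hU𝒰).2.2 y hy z hzU _ ha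
    have ho2 : |y' z - y' (pt ⟨U, hU𝒰⟩)| < ε / 4 :=
      (hPall U hU𝒰).2.2 y' hy' z hzU _ ha
    have heq : y (pt ⟨U, hU𝒰⟩) = y' (pt ⟨U, hU𝒰⟩) := hagree _ ⟨⟨U, hU𝒰⟩, rfl⟩
    obtain ⟨e1, e1'⟩ := abs_sub_lt_iff.mp hz1
    obtain ⟨e2, e2'⟩ := abs_sub_lt_iff.mp hz2
    obtain ⟨e3, e3'⟩ := abs_sub_lt_iff.mp ho1
    obtain ⟨e4, e4'⟩ := abs_sub_lt_iff.mp ho2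
    exact abs_sub_lt_iff.mpr ⟨by linarith, by linarith⟩
  -- Step 3: assemble the countable separating set
  choose B hBc hBsep using fun n : ℕ => key (1 / (n + 1)) (by positivity)
  set A : Set X := ⋃ n, B n with hAdef
  have hAc : A.Countable := Set.countable_iUnion hBc
  have hsep : ∀ y ∈ Y, ∀ y' ∈ Y, y ≠ y' → ∃ a ∈ A, y a ≠ y' a := by
    intro y hy y' hy' hne
    by_contra hcon
    push_neg at hcon
    apply hne
    funext x
    by_contra hx
    have hd : 0 < |y x - y' x| := abs_pos.mpr (sub_ne_zero.mpr hx)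
    obtain ⟨n, hn⟩ := exists_nat_one_div_lt hd
    have hlt := hBsep n y hy y' hy'
      (fun b hb => hcon b (Set.mem_iUnion.mpr ⟨n, hb⟩)) x
    linarith
  refine ⟨⟨A, hAc, hsep⟩, ?_⟩
  -- Step 4: metrizability via the evaluation map into `ℝ^A`
  haveI : Countable ↥A := hAc.to_subtype
  set φ : ↥Y → (↥A → ℝ) := fun y a => (y : X → ℝ) a with hφdef
  have hφc : Continuous φ :=
    continuous_pi fun a => (continuous_apply (a : X)).comp continuous_subtype_val
  have hφi : Function.Injective φ := by
    intro y y' h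
    by_contra hne
    have hne' : (y : X → ℝ) ≠ (y' : X → ℝ) := fun h' => hne (Subtype.ext h')
    obtain ⟨a, haA, hay⟩ := hsep y y.2 y' y'.2 hne'
    exact hay (congrFun h ⟨a, haA⟩)
  exact (hφc.isClosedEmbedding hφi).toIsEmbedding.metrizableSpace
end

section
/- Let Y ⊆ ℝ^T be compact (with the product topology), Z a metric space, f : Y → Z continuous, ε ≥ 0, and S ⊆ T a set such that dist(f(y'), f(y'')) ≤ ε whenever y', y'' ∈ Y satisfy y'|_S = y''|_S. Then for every ε' > ε there exist a finite set S₀ ⊆ S and δ > 0 such that dist(f(y'), f(y'')) ≤ ε' for all y', y'' ∈ Y with |y'(s) − y''(s)| < δ for every s ∈ S₀. -/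
universe u v

/-- Quantitative dependence on finitely many coordinates: if `f` is continuous on a
compact `Y ⊆ ℝ^T`, `Z` is metric, and `dist (f y') (f y'') ≤ ε` whenever `y', y'' ∈ Y`
agree on `S`, then for every `ε' > ε` there are a finite `S₀ ⊆ S` and `δ > 0` such that
`dist (f y') (f y'') ≤ ε'` whenever `|y' s - y'' s| < δ` for all `s ∈ S₀`. -/
theorem dependence_finitely_many_coordinates {T : Type u} (Y : Set (T → ℝ))
    (hY : IsCompact Y) {Z : Type v} [MetricSpace Z] (f : (T → ℝ) → Z)
    (hf : ContinuousOn f Y) (ε : ℝ) (hε : 0 ≤ ε) (S : Set T)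
    (h : ∀ y' ∈ Y, ∀ y'' ∈ Y, (∀ s ∈ S, y' s = y'' s) → dist (f y') (f y'') ≤ ε) :
    ∀ ε' : ℝ, ε < ε' → ∃ S₀ : Finset T, ↑S₀ ⊆ S ∧ ∃ δ : ℝ, 0 < δ ∧
      ∀ y' ∈ Y, ∀ y'' ∈ Y, (∀ s ∈ S₀, |y' s - y'' s| < δ) →
        dist (f y') (f y'') ≤ ε' := by
  intro ε' hε'
  by_contra hcon
  push_neg at hcon
  -- index type: finite subsets of S together with n (δ = 1/(n+1))
  let ι := {p : Finset T × ℕ // ↑p.1 ⊆ S}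
  have hne : Nonempty ι := ⟨⟨(∅, 0), by simp⟩⟩
  let g : (T → ℝ) × (T → ℝ) → ℝ := fun q => dist (f q.1) (f q.2)
  have hYY : IsCompact (Y ×ˢ Y) := hY.prod hY
  have hYYc : IsClosed (Y ×ˢ Y) := hYY.isClosed
  have hg : ContinuousOn g (Y ×ˢ Y) := by
    have := continuous_dist.comp_continuousOn
      ((hf.comp continuous_fst.continuousOn (fun q (hq : q ∈ Y ×ˢ Y) => hq.1)).prodMk
        (hf.comp continuous_snd.continuousOn (fun q (hq : q ∈ Y ×ˢ Y) => hq.2)))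
    exact this
  let C : ι → Set ((T → ℝ) × (T → ℝ)) := fun i =>
    ((Y ×ˢ Y) ∩ g ⁻¹' Set.Ici ε') ∩
      {q | ∀ s ∈ i.1.1, |q.1 s - q.2 s| ≤ 1 / (i.1.2 + 1)}
  have hCcl : ∀ i, IsClosed (C i) := by
    intro i
    apply IsClosed.inter
    · exact hg.preimage_isClosed_of_isClosed hYYc isClosed_Ici
    · have : {q : (T → ℝ) × (T → ℝ) | ∀ s ∈ i.1.1, |q.1 s - q.2 s| ≤ 1 / (i.1.2 + 1)} =
          ⋂ s ∈ i.1.1, {q : (T → ℝ) × (T → ℝ) | |q.1 s - q.2 s| ≤ 1 / (i.1.2 + 1)} := by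
        ext q; simp
      rw [this]
      apply isClosed_biInter
      intro s _
      have : Continuous fun q : (T → ℝ) × (T → ℝ) => |q.1 s - q.2 s| :=
        (((continuous_apply s).comp continuous_fst).sub
          ((continuous_apply s).comp continuous_snd)).abs
      exact isClosed_le this continuous_const
  have hCsub : ∀ i, C i ⊆ Y ×ˢ Y := fun i q hq => hq.1.1
  have hCc : ∀ i, IsCompact (C i) := fun i => hYY.of_isClosed_subset (hCcl i) (hCsub i)
  have hCn : ∀ i, (C i).Nonempty := by
    rintro ⟨⟨S₀, n⟩, hS₀⟩
    have hδ : (0 : ℝ) < 1 / (n + 1) := by positivity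
    obtain ⟨y', hy', y'', hy'', hlt, hd⟩ := hcon S₀ hS₀ (1 / (n + 1)) hδ
    exact ⟨(y', y''), ⟨⟨⟨hy', hy''⟩, le_of_lt hd⟩, fun s hs => (hlt s hs).le⟩⟩
  have hdir : Directed (· ⊇ ·) C := by
    classical
    rintro ⟨⟨S₁, n₁⟩, h₁⟩ ⟨⟨S₂, n₂⟩, h₂⟩
    have hc1 : ((n₁ : ℝ)) ≤ (max n₁ n₂ : ℕ) := by exact_mod_cast le_max_left n₁ n₂
    have hc2 : ((n₂ : ℝ)) ≤ (max n₁ n₂ : ℕ) := by exact_mod_cast le_max_right n₁ n₂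
    refine ⟨⟨⟨S₁ ∪ S₂, max n₁ n₂⟩, by
        simp only [Finset.coe_union]; exact Set.union_subset h₁ h₂⟩,
      fun q hq => ⟨hq.1, fun s hs => ?_⟩, fun q hq => ⟨hq.1, fun s hs => ?_⟩⟩
    · refine (hq.2 s (Finset.mem_union_left _ hs)).trans ?_
      apply one_div_le_one_div_of_le (by positivity)
      linarith
    · refine (hq.2 s (Finset.mem_union_right _ hs)).trans ?_
      apply one_div_le_one_div_of_le (by positivity)
      linarith
  obtain ⟨q, hq⟩ :=
    IsCompact.nonempty_iInter_of_directed_nonempty_isCompact_isClosed C hdir hCn hCc hCcl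
  have hqmem : ∀ i, q ∈ C i := by
    intro i; exact Set.mem_iInter.1 hq i
  have hq0 := hqmem ⟨(∅, 0), by simp⟩
  have hqY : q ∈ Y ×ˢ Y := hq0.1.1
  have hqd : ε' ≤ dist (f q.1) (f q.2) := hq0.1.2
  have hagree : ∀ s ∈ S, q.1 s = q.2 s := by
    intro s hs
    have key : ∀ n : ℕ, |q.1 s - q.2 s| ≤ 1 / (n + 1) := by
      intro n
      have := (hqmem ⟨({s}, n), by simpa using hs⟩).2 s (by simp)
      simpa using this
    have h0 : |q.1 s - q.2 s| ≤ 0 := by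
      by_contra hpos
      push_neg at hpos
      obtain ⟨n, hn⟩ := exists_nat_one_div_lt hpos
      exact absurd (key n) (not_le.2 (by exact_mod_cast hn))
    have := abs_nonneg (q.1 s - q.2 s)
    have : |q.1 s - q.2 s| = 0 := le_antisymm h0 this
    linarith [abs_eq_zero.1 this, sub_eq_zero.1 (abs_eq_zero.1 this)]
  exact absurd (h q.1 hqY.1 q.2 hqY.2 hagree) (not_le.2 (lt_of_lt_of_le hε' hqd))
end

section
/- Every strongly Baire space is a Namioka space. -/
universe u

namespace NamiokaSB

open Set Topology

variable {X : Type u} [TopologicalSpace X]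

lemma interior_union_eq_empty {s t : Set X} (hs : IsClosed s) (hsi : interior s = ∅)
    (hti : interior t = ∅) : interior (s ∪ t) = ∅ := by
  have h1 : interior (s ∪ t) \ s ⊆ interior t := by
    apply interior_maximal ?_ (isOpen_interior.sdiff hs)
    rintro y ⟨hy1, hy2⟩
    rcases interior_subset hy1 with h | h
    · exact absurd h hy2
    · exact h
  rw [hti] at h1
  have h1' : interior (s ∪ t) ⊆ s := fun y hy => by
    by_contra hns
    exact h1 ⟨hy, hns⟩
  have h2 := interior_maximal h1' isOpen_interior
  rw [hsi, Set.subset_empty_iff] at h2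
  exact h2

lemma baire_of_stronglyBaire (h : StronglyBaire X) : BaireSpace X := by
  constructor
  intro o ho hd
  rw [dense_iff_inter_open]
  intro N hNopen hNne
  by_contra hempty
  have hsub : N ⊆ ⋃ n : ℕ, (o n)ᶜ := by
    intro x hx
    by_contra hx'
    simp only [mem_iUnion, mem_compl_iff, not_exists, not_not] at hx'
    exact hempty ⟨x, hx, mem_iInter.2 hx'⟩
  set A : Ordinal.{u} → Set X := fun ξ => ⋃ (m : ℕ) (_ : (m : Ordinal.{u}) ≤ ξ), (o m)ᶜ with hA
  have hAfin : ∀ n : ℕ, A n = ⋃ m ∈ Finset.range (n + 1), (o m)ᶜ := by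
    intro n
    ext x
    simp only [hA, mem_iUnion, Finset.mem_range, exists_prop]
    constructor
    · rintro ⟨m, hm, hx⟩
      refine ⟨m, ?_, hx⟩
      have : (m : ℕ) ≤ n := by exact_mod_cast hm
      omega
    · rintro ⟨m, hm, hx⟩
      exact ⟨m, by exact_mod_cast Nat.le_of_lt_succ hm, hx⟩
  have hint : ∀ s : Finset ℕ, interior (⋃ m ∈ s, (o m)ᶜ) = ∅ := by
    intro s
    induction s using Finset.induction_on with
    | empty => simp
    | @insert a s ha ih =>
      rw [Finset.set_biUnion_insert]
      apply interior_union_eq_empty (ho a).isClosed_compl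
      · rw [interior_compl, (hd a).closure_eq, compl_univ]
      · exact ih
  have hclosed : ∀ ξ < Ordinal.omega0.{u}, IsClosed (A ξ) := by
    intro ξ hξ
    obtain ⟨n, rfl⟩ := Ordinal.lt_omega0.mp hξ
    rw [hAfin n]
    exact (Finset.range (n + 1)).finite_toSet.isClosed_biUnion fun m _ => (ho m).isClosed_compl
  have hintA : ∀ ξ < Ordinal.omega0.{u}, interior (A ξ) = ∅ := by
    intro ξ hξ
    obtain ⟨n, rfl⟩ := Ordinal.lt_omega0.mp hξ
    rw [hAfin n]
    exact hint _
  have hmono : ∀ ξ η : Ordinal.{u}, ξ ≤ η → η < Ordinal.omega0.{u} → A ξ ⊆ A η := by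
    intro ξ η hξη _ x hx
    simp only [hA, mem_iUnion] at hx ⊢
    obtain ⟨m, hm, hx⟩ := hx
    exact ⟨m, hm.trans hξη, hx⟩
  have hlimit : ∀ β : Ordinal.{u}, Order.IsSuccLimit β → β < Ordinal.omega0.{u} →
      A β ⊆ ⋃ ξ ∈ Set.Iio β, A ξ := by
    intro β hβ hβω
    exact absurd (Ordinal.omega0_le_of_isSuccLimit hβ) (not_le.mpr hβω)
  have hconc := h Ordinal.omega0.{u} A A hclosed hclosed hmono hmono
    (fun ξ _ => subset_rfl) hlimit
  have hNsub : N ⊆ ⋃ ξ ∈ Set.Iio Ordinal.omega0.{u}, A ξ := by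
    intro x hx
    obtain ⟨m, hm⟩ := mem_iUnion.mp (hsub hx)
    refine mem_iUnion₂.mpr ⟨(m : Ordinal.{u}), Ordinal.nat_lt_omega0 m, ?_⟩
    simp only [hA, mem_iUnion]
    exact ⟨m, le_rfl, hm⟩
  have hNint := (interior_maximal hNsub hNopen).trans hconc
  have hempty' : (⋃ ξ ∈ Set.Iio Ordinal.omega0.{u}, interior (A ξ)) = ∅ := by
    apply Set.eq_empty_iff_forall_notMem.mpr
    intro x hx
    obtain ⟨ξ, hξ, hx⟩ := mem_iUnion₂.mp hx
    rw [hintA ξ hξ] at hx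
    exact hx
  rw [hempty', closure_empty, Set.subset_empty_iff] at hNint
  obtain ⟨x, hx⟩ := hNne
  exact absurd hNint (by simp [Set.eq_empty_iff_forall_notMem]; exact ⟨x, hx⟩)

section Main

set_option linter.unusedSectionVars false

variable {K : Type u} [TopologicalSpace K] [CompactSpace K]

/-- The set of points `y ∈ closure U` such that `f y` "τ-factors" through the
identifications given by the functions `f x`, `x ∈ T`. -/
def factSet (f : X → K → ℝ) (U : Set X) (τ : ℝ) (T : Set X) : Set X :=
  closure U ∩ {y | ∀ k k', (∀ x ∈ T, f x k = f x k') → |f y k - f y k'| ≤ τ}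

variable (f : X → K → ℝ) (U : Set X)

lemma isClosed_factSet (hf1 : ∀ k, Continuous fun x => f x k) (τ : ℝ) (T : Set X) :
    IsClosed (factSet f U τ T) := by
  apply isClosed_closure.inter
  have heq : {y | ∀ k k', (∀ x ∈ T, f x k = f x k') → |f y k - f y k'| ≤ τ}
      = ⋂ (k) (k') (_ : ∀ x ∈ T, f x k = f x k'), {y | |f y k - f y k'| ≤ τ} := by
    ext y; simp only [mem_setOf_eq, mem_iInter]
  rw [heq]
  exact isClosed_iInter fun k => isClosed_iInter fun k' => isClosed_iInter fun _ =>
    isClosed_le (continuous_abs.comp ((hf1 k).sub (hf1 k'))) continuous_const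

lemma factSet_mono {τ τ' : ℝ} (hτ : τ ≤ τ') {T T' : Set X} (hT : T ⊆ T') :
    factSet f U τ T ⊆ factSet f U τ' T' := by
  rintro y ⟨h1, h2⟩
  exact ⟨h1, fun k k' hkk' => le_trans (h2 k k' fun x hx => hkk' x (hT hx)) hτ⟩

lemma factSet_decomp (hf2 : ∀ x, Continuous (f x)) {τ τ' : ℝ} (h : τ < τ')
    {T : Set X} {y : X} (hy : y ∈ factSet f U τ T) :
    ∃ F : Finset X, ↑F ⊆ T ∧ y ∈ factSet f U τ' ↑F := by
  by_contra hcon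
  push_neg at hcon
  classical
  set P : Finset ↥T → Set (K × K) := fun Fs =>
    {p | (∀ a ∈ Fs, f ↑a p.1 = f ↑a p.2) ∧ τ' ≤ |f y p.1 - f y p.2|} with hP
  have hclosed : ∀ Fs, IsClosed (P Fs) := by
    intro Fs
    apply IsClosed.inter
    · show IsClosed {p : K × K | ∀ a ∈ Fs, f ↑a p.1 = f ↑a p.2}
      have : {p : K × K | ∀ a ∈ Fs, f ↑a p.1 = f ↑a p.2}
          = ⋂ a ∈ Fs, {p : K × K | f ↑a p.1 = f ↑a p.2} := by
        ext p; simp only [mem_setOf_eq, mem_iInter]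
      rw [this]
      exact isClosed_iInter fun a => isClosed_iInter fun _ =>
        isClosed_eq ((hf2 ↑a).comp continuous_fst) ((hf2 ↑a).comp continuous_snd)
    · show IsClosed {p : K × K | τ' ≤ |f y p.1 - f y p.2|}
      exact isClosed_le continuous_const
        (continuous_abs.comp (((hf2 y).comp continuous_fst).sub ((hf2 y).comp continuous_snd)))
  have hne : ∀ Fs, (P Fs).Nonempty := by
    intro Fs
    by_contra hemp
    rw [Set.not_nonempty_iff_eq_empty] at hemp
    apply hcon (Fs.image Subtype.val)
    · intro x hx
      obtain ⟨a, _, rfl⟩ := Finset.mem_image.mp (Finset.mem_coe.mp hx)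
      exact a.2
    · refine ⟨hy.1, fun k k' hkk' => ?_⟩
      have hnotin : (k, k') ∉ P Fs := by rw [hemp]; exact notMem_empty _
      simp only [hP, mem_setOf_eq, not_and, not_le] at hnotin
      refine le_of_lt (hnotin fun a ha => ?_)
      exact hkk' ↑a (Finset.mem_coe.mpr (Finset.mem_image_of_mem Subtype.val ha))
  have hdir : Directed (· ⊇ ·) P := by
    intro Fs Gs
    refine ⟨Fs ∪ Gs, ?_, ?_⟩
    · rintro p ⟨h1, h2⟩
      exact ⟨fun a ha => h1 a (Finset.mem_union_left _ ha), h2⟩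
    · rintro p ⟨h1, h2⟩
      exact ⟨fun a ha => h1 a (Finset.mem_union_right _ ha), h2⟩
  obtain ⟨p, hp⟩ := IsCompact.nonempty_iInter_of_directed_nonempty_isCompact_isClosed
    P hdir hne (fun Fs => (hclosed Fs).isCompact) hclosed
  have heq : ∀ x ∈ T, f x p.1 = f x p.2 := by
    intro x hx
    exact (mem_iInter.mp hp {⟨x, hx⟩}).1 ⟨x, hx⟩ (Finset.mem_singleton_self _)
  have h1 : |f y p.1 - f y p.2| ≤ τ := hy.2 p.1 p.2 heq
  have h2 : τ' ≤ |f y p.1 - f y p.2| := (mem_iInter.mp hp ∅).2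
  linarith

end Main

section Main2

set_option linter.unusedSectionVars false

variable {K : Type u} [TopologicalSpace K] [CompactSpace K]
variable (f : X → K → ℝ) (U₀ : Set X)

lemma fin_nwd [BaireSpace X] (hU₀ : IsOpen U₀)
    (hf1 : ∀ k, Continuous fun x => f x k) (hf2 : ∀ x, Continuous (f x)) {ε : ℝ}
    (hbad : ∀ O : Set X, IsOpen O → O.Nonempty → O ⊆ U₀ →
      ∃ a ∈ O, ∃ b ∈ O, ∃ k : K, ε < |f a k - f b k|)
    {τ : ℝ} (hτ : 0 < τ) (h8 : τ < ε / 8) (F : Finset X) :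
    interior (factSet f U₀ τ ↑F) ∩ U₀ = ∅ := by
  by_contra hne
  obtain ⟨w, hw⟩ := Set.nonempty_iff_ne_empty.mpr hne
  set W := interior (factSet f U₀ τ ↑F) ∩ U₀ with hWdef
  have hWopen : IsOpen W := isOpen_interior.inter hU₀
  have hWsub : W ⊆ factSet f U₀ τ ↑F := fun y hy => interior_subset hy.1
  have hWU : W ⊆ U₀ := fun y hy => hy.2
  -- modulus sets
  set D : ℕ → Set X := fun n =>
    {y | ∀ k k', (∀ x ∈ F, |f x k - f x k'| ≤ 1 / (n + 1)) → |f y k - f y k'| ≤ 3 * τ} with hD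
  have hDclosed : ∀ n, IsClosed (D n) := by
    intro n
    have heq : D n = ⋂ (k) (k') (_ : ∀ x ∈ F, |f x k - f x k'| ≤ 1 / (n + 1 : ℝ)),
        {y | |f y k - f y k'| ≤ 3 * τ} := by
      ext y; simp only [hD, mem_setOf_eq, mem_iInter]
    rw [heq]
    exact isClosed_iInter fun k => isClosed_iInter fun k' => isClosed_iInter fun _ =>
      isClosed_le (continuous_abs.comp ((hf1 k).sub (hf1 k'))) continuous_const
  -- W is covered by the D n
  have hWD : W ⊆ ⋃ n, D n := by
    intro y hy
    by_contra hyn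
    simp only [mem_iUnion, hD, mem_setOf_eq, not_exists, not_forall, not_le] at hyn
    set E : ℕ → Set (K × K) := fun n =>
      {p | (∀ x ∈ F, |f x p.1 - f x p.2| ≤ 1 / (n + 1)) ∧ 3 * τ ≤ |f y p.1 - f y p.2|} with hE
    have hEne : ∀ n, (E n).Nonempty := by
      intro n
      obtain ⟨k, k', h1, h2⟩ := hyn n
      exact ⟨(k, k'), h1, h2.le⟩
    have hEclosed : ∀ n, IsClosed (E n) := by
      intro n
      apply IsClosed.inter
      · show IsClosed {p : K × K | ∀ x ∈ F, |f x p.1 - f x p.2| ≤ 1 / (n + 1)}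
        have heq : {p : K × K | ∀ x ∈ F, |f x p.1 - f x p.2| ≤ 1 / (n + 1)}
            = ⋂ x ∈ F, {p : K × K | |f x p.1 - f x p.2| ≤ 1 / (n + 1)} := by
          ext p; simp only [mem_setOf_eq, mem_iInter]
        rw [heq]
        exact isClosed_iInter fun x => isClosed_iInter fun _ =>
          isClosed_le (continuous_abs.comp
            (((hf2 x).comp continuous_fst).sub ((hf2 x).comp continuous_snd))) continuous_const
      · show IsClosed {p : K × K | 3 * τ ≤ |f y p.1 - f y p.2|}
        exact isClosed_le continuous_const (continuous_abs.comp
          (((hf2 y).comp continuous_fst).sub ((hf2 y).comp continuous_snd)))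
    have hEdec : ∀ n, E (n + 1) ⊆ E n := by
      rintro n p ⟨h1, h2⟩
      refine ⟨fun x hx => le_trans (h1 x hx) ?_, h2⟩
      apply one_div_le_one_div_of_le
      · positivity
      · push_cast; linarith
    obtain ⟨p, hp⟩ := IsCompact.nonempty_iInter_of_sequence_nonempty_isCompact_isClosed
      E hEdec hEne ((hEclosed 0).isCompact) hEclosed
    have heqp : ∀ x ∈ F, f x p.1 = f x p.2 := by
      intro x hx
      by_contra hne'
      have habs : 0 < |f x p.1 - f x p.2| := abs_pos.mpr (sub_ne_zero.mpr hne')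
      obtain ⟨n, hn⟩ := exists_nat_one_div_lt habs
      have := (mem_iInter.mp hp n).1 x hx
      linarith
    have h1 : |f y p.1 - f y p.2| ≤ τ := (hWsub hy).2 p.1 p.2 heqp
    have h2 : 3 * τ ≤ |f y p.1 - f y p.2| := (mem_iInter.mp hp 0).2
    linarith
  -- Baire: some D n has interior meeting W
  have hcover : (⋃ n, D n ∪ Wᶜ) = univ := by
    apply eq_univ_of_forall
    intro x
    by_cases hx : x ∈ W
    · obtain ⟨n, hn⟩ := mem_iUnion.mp (hWD hx)
      exact mem_iUnion.mpr ⟨n, Or.inl hn⟩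
    · exact mem_iUnion.mpr ⟨0, Or.inr hx⟩
  have hdense := dense_iUnion_interior_of_closed
    (fun n => (hDclosed n).union hWopen.isClosed_compl) hcover
  obtain ⟨z, hz1, hz2⟩ := hdense.exists_mem_open hWopen ⟨w, hw⟩
  obtain ⟨n, hzn⟩ := mem_iUnion.mp hz1
  set O : Set X := interior (D n ∪ Wᶜ) ∩ W with hO
  have hOopen : IsOpen O := isOpen_interior.inter hWopen
  have hOne : O.Nonempty := ⟨z, hzn, hz2⟩
  have hOD : O ⊆ D n := by
    rintro x ⟨hx1, hx2⟩
    rcases interior_subset hx1 with hh | hh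
    · exact hh
    · exact absurd hx2 hh
  -- finite cover of K by "balls"
  set r : ℝ := 1 / (2 * (n + 1)) with hr
  have hrpos : 0 < r := by positivity
  have hcovK : (univ : Set K) ⊆ ⋃ k₀ : K, {k | ∀ x ∈ F, |f x k - f x k₀| < r} := by
    intro k _
    exact mem_iUnion.mpr ⟨k, fun x hx => by simpa using hrpos⟩
  obtain ⟨C, hC⟩ := isCompact_univ.elim_finite_subcover
    (fun k₀ : K => {k | ∀ x ∈ F, |f x k - f x k₀| < r})
    (fun k₀ => by
      show IsOpen {k | ∀ x ∈ F, |f x k - f x k₀| < r}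
      have heq : {k | ∀ x ∈ F, |f x k - f x k₀| < r}
          = ⋂ x ∈ F, {k | |f x k - f x k₀| < r} := by
        ext k; simp only [mem_setOf_eq, mem_iInter]
      rw [heq]
      exact isOpen_biInter_finset fun x _ =>
        isOpen_lt (continuous_abs.comp ((hf2 x).sub continuous_const)) continuous_const) hcovK
  -- shrink to control the center functions
  obtain ⟨w₀, hw₀⟩ := hOne
  set V : Set X := O ∩ ⋂ k₀ ∈ C, {y | |f y k₀ - f w₀ k₀| < τ / 2} with hV
  have hVopen : IsOpen V := hOopen.inter (isOpen_biInter_finset fun k₀ _ =>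
    isOpen_lt (continuous_abs.comp ((hf1 k₀).sub continuous_const)) continuous_const)
  have hVne : V.Nonempty := ⟨w₀, hw₀, mem_iInter₂.mpr fun k₀ _ => by simpa using half_pos hτ⟩
  have hVU : V ⊆ U₀ := fun y hy => hWU hy.1.2
  obtain ⟨a, ha, b, hb, k, hk⟩ := hbad V hVopen hVne hVU
  obtain ⟨k₀, hk₀C, hkk₀⟩ := mem_iUnion₂.mp (hC (mem_univ k))
  have hFclose : ∀ x ∈ F, |f x k - f x k₀| ≤ 1 / (n + 1 : ℝ) := by
    intro x hx
    have h1 := hkk₀ x hx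
    have h2 : (1 : ℝ) / (2 * (n + 1)) ≤ 1 / (n + 1) := by
      apply one_div_le_one_div_of_le
      · positivity
      · nlinarith [Nat.cast_nonneg (α := ℝ) n]
    rw [hr] at h1
    linarith
  have e1 : |f a k - f a k₀| ≤ 3 * τ := hOD ha.1 k k₀ hFclose
  have e2 : |f b k - f b k₀| ≤ 3 * τ := hOD hb.1 k k₀ hFclose
  have e3 : |f a k₀ - f w₀ k₀| < τ / 2 := mem_iInter₂.mp ha.2 k₀ hk₀C
  have e4 : |f b k₀ - f w₀ k₀| < τ / 2 := mem_iInter₂.mp hb.2 k₀ hk₀C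
  have tineq : |f a k - f b k| ≤ |f a k - f a k₀| + (|f a k₀ - f w₀ k₀|
      + (|f w₀ k₀ - f b k₀| + |f b k₀ - f b k|)) := by
    have hid : f a k - f b k = (f a k - f a k₀) + ((f a k₀ - f w₀ k₀)
        + ((f w₀ k₀ - f b k₀) + (f b k₀ - f b k))) := by ring
    rw [hid]
    exact (abs_add_le _ _).trans (by
      gcongr
      exact (abs_add_le _ _).trans (by
        gcongr
        exact abs_add_le _ _))
  rw [abs_sub_comm (f w₀ k₀) (f b k₀)] at tineq
  rw [abs_sub_comm (f b k₀) (f b k)] at tineq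
  linarith

end Main2

section Main3

set_option linter.unusedSectionVars false
set_option maxHeartbeats 1000000

variable {K : Type u} [TopologicalSpace K] [CompactSpace K]
variable (f : X → K → ℝ) (U₀ : Set X)

lemma nwd (hSB : StronglyBaire X) [BaireSpace X] (hU₀ : IsOpen U₀)
    (hf1 : ∀ k, Continuous fun x => f x k) (hf2 : ∀ x, Continuous (f x)) {ε : ℝ}
    (hbad : ∀ O : Set X, IsOpen O → O.Nonempty → O ⊆ U₀ →
      ∃ a ∈ O, ∃ b ∈ O, ∃ k : K, ε < |f a k - f b k|) :
    ∀ (T : Set X) (τ : ℝ), 0 < τ → τ < ε / 8 → interior (factSet f U₀ τ T) ∩ U₀ = ∅ := by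
  suffices H : ∀ c : Cardinal.{u}, ∀ T : Set X, Cardinal.mk ↥T = c → ∀ τ : ℝ,
      0 < τ → τ < ε / 8 → interior (factSet f U₀ τ T) ∩ U₀ = ∅ by
    exact fun T τ h1 h2 => H _ T rfl τ h1 h2
  intro c
  induction c using WellFounded.induction Cardinal.lt_wf with
  | _ c IH =>
  intro T hT τ hτ0 hτ8
  by_cases hfin : T.Finite
  · have heq : factSet f U₀ τ T = factSet f U₀ τ ↑hfin.toFinset := by
      rw [Set.Finite.coe_toFinset]
    rw [heq]
    exact fin_nwd f U₀ hU₀ hf1 hf2 hbad hτ0 hτ8 hfin.toFinset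
  · -- infinite case
    have hTinf : T.Infinite := hfin
    haveI : Infinite ↥T := hTinf.to_subtype
    classical
    set lam : Cardinal.{u} := Cardinal.mk ↥T with hlam
    have hℵ₀le : Cardinal.aleph0.{u} ≤ lam := Cardinal.aleph0_le_mk ↥T
    have hordlim : Order.IsSuccLimit (lam.ord) := Cardinal.isSuccLimit_ord hℵ₀le
    have hsucclt : ∀ {η : Ordinal.{u}}, η < lam.ord → η + 1 < lam.ord := by
      intro η hη
      rw [Ordinal.add_one_eq_succ]
      exact hordlim.succ_lt hη
    have hlt1 : ∀ o : Ordinal.{u}, o < o + 1 := by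
      intro o
      rw [Ordinal.add_one_eq_succ]
      exact Order.lt_succ o
    -- enumeration of finite subsets of T
    obtain ⟨E⟩ : Nonempty ((lam.ord).ToType ≃ Finset ↥T) := by
      rw [← Cardinal.eq, Cardinal.mk_toType, Cardinal.card_ord, Cardinal.mk_finset_of_infinite]
    set FF : Ordinal.{u} → Set X := fun η =>
      if h : η < lam.ord then
        (fun a : ↥T => (a : X)) '' ↑(E ((Ordinal.ToType.mk (o := lam.ord)) ⟨η, h⟩))
      else ∅ with hFF
    have hFFfin : ∀ η, (FF η).Finite := by
      intro η
      by_cases h : η < lam.ord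
      · simp only [hFF, dif_pos h]
        exact ((E ((Ordinal.ToType.mk (o := lam.ord)) ⟨η, h⟩)).finite_toSet).image _
      · simp only [hFF, dif_neg h]
        exact finite_empty
    have hFFsub : ∀ η, FF η ⊆ T := by
      intro η
      by_cases h : η < lam.ord
      · simp only [hFF, dif_pos h]
        rintro x ⟨a, _, rfl⟩
        exact a.2
      · simp only [hFF, dif_neg h]
        exact empty_subset T
    have hFFsurj : ∀ F : Finset X, ↑F ⊆ T → ∃ η, η < lam.ord ∧ FF η = ↑F := by
      intro F hF
      set Fs : Finset ↥T := F.preimage Subtype.val Subtype.val_injective.injOn with hFs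
      have himg : ((fun a : ↥T => (a : X)) '' ↑Fs) = ↑F := by
        ext x
        constructor
        · rintro ⟨a, ha, rfl⟩
          exact Finset.mem_coe.mpr (Finset.mem_preimage.mp (Finset.mem_coe.mp ha))
        · intro hx
          exact ⟨⟨x, hF hx⟩,
            Finset.mem_coe.mpr (Finset.mem_preimage.mpr (Finset.mem_coe.mp hx)), rfl⟩
      have hFFval : ∀ z : Set.Iio lam.ord,
          FF z.1 = (fun a : ↥T => (a : X)) '' ↑(E ((Ordinal.ToType.mk (o := lam.ord)) z)) := by
        rintro ⟨η, hη⟩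
        exact dif_pos hη
      refine ⟨(((Ordinal.ToType.mk (o := lam.ord))).symm (E.symm Fs)).1,
        Set.mem_Iio.mp (((Ordinal.ToType.mk (o := lam.ord))).symm (E.symm Fs)).2, ?_⟩
      rw [hFFval (((Ordinal.ToType.mk (o := lam.ord))).symm (E.symm Fs)),
        OrderIso.apply_symm_apply, Equiv.apply_symm_apply]
      exact himg
    -- tolerances
    set τ₂ : ℝ := τ + (ε / 8 - τ) / 4 with hτ₂
    set τ₃ : ℝ := τ + (ε / 8 - τ) / 2 with hτ₃
    have hττ₂ : τ < τ₂ := by rw [hτ₂]; linarith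
    have hτ₂₃ : τ₂ < τ₃ := by rw [hτ₂, hτ₃]; linarith
    have hτ₃8 : τ₃ < ε / 8 := by rw [hτ₃]; linarith
    have hτ₃0 : 0 < τ₃ := by rw [hτ₃]; linarith
    -- the families
    set S : Ordinal.{u} → Set X := fun ξ => ⋃ (η : Ordinal.{u}) (_ : η < ξ), FF η with hS
    have hmemS : ∀ {x : X} {ξ : Ordinal.{u}}, x ∈ S ξ ↔ ∃ η, η < ξ ∧ x ∈ FF η := by
      intro x ξ
      simp only [hS, mem_iUnion, exists_prop]
    have hSmono : ∀ {ξ ξ' : Ordinal.{u}}, ξ ≤ ξ' → S ξ ⊆ S ξ' := by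
      intro ξ ξ' hle x hx
      obtain ⟨η, hη, hx⟩ := hmemS.mp hx
      exact hmemS.mpr ⟨η, lt_of_lt_of_le hη hle, hx⟩
    set A : Ordinal.{u} → Set X := fun ξ =>
      closure (⋃ (η : Ordinal.{u}) (_ : η < ξ), factSet f U₀ τ₂ (FF η)) with hA
    set B : Ordinal.{u} → Set X := fun ξ => factSet f U₀ τ₃ (S (ξ + 1)) with hB
    have hAfact : ∀ ξ, A ξ ⊆ factSet f U₀ τ₂ (S ξ) := by
      intro ξ
      apply closure_minimal ?_ (isClosed_factSet f U₀ hf1 τ₂ (S ξ))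
      apply iUnion₂_subset
      intro η hη
      exact factSet_mono f U₀ le_rfl fun z hz => hmemS.mpr ⟨η, hη, hz⟩
    have hAc : ∀ ξ < lam.ord, IsClosed (A ξ) := fun ξ _ => isClosed_closure
    have hBc : ∀ ξ < lam.ord, IsClosed (B ξ) := fun ξ _ => isClosed_factSet f U₀ hf1 _ _
    have hAm : ∀ ξ η : Ordinal.{u}, ξ ≤ η → η < lam.ord → A ξ ⊆ A η := by
      intro ξ η hle _
      apply closure_mono
      apply iUnion₂_subset
      intro η' hη'
      intro z hz
      exact mem_iUnion₂.mpr ⟨η', lt_of_lt_of_le hη' hle, hz⟩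
    have hBm : ∀ ξ η : Ordinal.{u}, ξ ≤ η → η < lam.ord → B ξ ⊆ B η := by
      intro ξ η hle _
      exact factSet_mono f U₀ le_rfl (hSmono (by exact add_le_add_left hle 1))
    have hAB : ∀ ξ < lam.ord, A ξ ⊆ B ξ := by
      intro ξ _
      exact (hAfact ξ).trans (factSet_mono f U₀ hτ₂₃.le (hSmono (hlt1 ξ).le))
    have hocc : ∀ β : Ordinal.{u}, Order.IsSuccLimit β → β < lam.ord →
        A β ⊆ ⋃ ξ ∈ Set.Iio β, B ξ := by
      intro β hβ hβΛ x hx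
      have hx' : x ∈ factSet f U₀ τ₂ (S β) := hAfact β hx
      obtain ⟨F₀, hF₀S, hxF₀⟩ := factSet_decomp f U₀ hf2 hτ₂₃ hx'
      set g : X → Ordinal.{u} := fun a =>
        if h : ∃ η, η < β ∧ a ∈ FF η then h.choose else 0 with hg
      have hgspec : ∀ a ∈ F₀, g a < β ∧ a ∈ FF (g a) := by
        intro a ha
        have hmem : a ∈ S β := hF₀S (Finset.mem_coe.mpr ha)
        have hex : ∃ η, η < β ∧ a ∈ FF η := hmemS.mp hmem
        rw [hg]
        simp only [dif_pos hex]
        exact hex.choose_spec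
      set η₀ : Ordinal.{u} := F₀.sup g with hη₀
      have hη₀β : η₀ < β := by
        rw [hη₀, Finset.sup_lt_iff (by rw [Ordinal.bot_eq_zero]; exact hβ.pos)]
        exact fun a ha => (hgspec a ha).1
      have hsub : (↑F₀ : Set X) ⊆ S (η₀ + 1) := by
        intro a ha
        have hga := hgspec a (Finset.mem_coe.mp ha)
        exact hmemS.mpr ⟨g a,
          lt_of_le_of_lt (Finset.le_sup (Finset.mem_coe.mp ha)) (hlt1 η₀), hga.2⟩
      exact mem_iUnion₂.mpr ⟨η₀, hη₀β, factSet_mono f U₀ le_rfl hsub hxF₀⟩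
    -- cardinality bound for initial segments
    have hS_eq : ∀ ξ : Ordinal.{u},
        S ξ = ⋃ i : ξ.ToType, FF (((Ordinal.ToType.mk (o := ξ))).symm i : Set.Iio ξ) := by
      intro ξ
      ext x
      rw [hmemS]
      constructor
      · rintro ⟨η, hη, hx⟩
        refine mem_iUnion.mpr ⟨(Ordinal.ToType.mk (o := ξ)) ⟨η, hη⟩, ?_⟩
        rwa [OrderIso.symm_apply_apply]
      · intro hx
        obtain ⟨i, hi⟩ := mem_iUnion.mp hx
        exact ⟨_, (((Ordinal.ToType.mk (o := ξ))).symm i).2, hi⟩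
    have hcard : ∀ ξ : Ordinal.{u}, ξ < lam.ord → Cardinal.mk ↥(S ξ) < lam := by
      intro ξ hξ
      rcases eq_or_lt_of_le hℵ₀le with hc | hc
      · -- lam = ℵ₀ : S ξ is finite
        have hfinT : Finite ξ.ToType := by
          rw [← Cardinal.lt_aleph0_iff_finite, Cardinal.mk_toType]
          rw [hc]
          exact Cardinal.lt_ord.mp hξ
        have hfinS : (S ξ).Finite := by
          rw [hS_eq ξ]
          exact Set.finite_iUnion fun i => hFFfin _
        calc Cardinal.mk ↥(S ξ) < Cardinal.aleph0 := hfinS.lt_aleph0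
          _ ≤ lam := hℵ₀le
      · -- ℵ₀ < lam
        have h1 : Cardinal.mk ↥(S ξ) ≤
            Cardinal.sum (fun i : ξ.ToType =>
              Cardinal.mk ↥(FF (((Ordinal.ToType.mk (o := ξ))).symm i : Set.Iio ξ))) := by
          rw [hS_eq ξ]
          exact Cardinal.mk_iUnion_le_sum_mk
        have h2 : Cardinal.sum (fun i : ξ.ToType =>
            Cardinal.mk ↥(FF (((Ordinal.ToType.mk (o := ξ))).symm i : Set.Iio ξ)))
            ≤ Cardinal.sum (fun _ : ξ.ToType => Cardinal.aleph0.{u}) :=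
          Cardinal.sum_le_sum _ _ (fun i => ((hFFfin _).lt_aleph0).le)
        have h3 : Cardinal.sum (fun _ : ξ.ToType => Cardinal.aleph0.{u})
            = Cardinal.mk ξ.ToType * Cardinal.aleph0 := Cardinal.sum_const' _ _
        have h4 : Cardinal.mk ξ.ToType * Cardinal.aleph0 < lam :=
          Cardinal.mul_lt_of_lt hℵ₀le
            (by rw [Cardinal.mk_toType]; exact Cardinal.lt_ord.mp hξ) hc
        calc Cardinal.mk ↥(S ξ) ≤ _ := h1
          _ ≤ _ := h2
          _ = _ := h3
          _ < lam := h4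
    -- apply strongly Baire
    have hconc := hSB lam.ord A B hAc hBc hAm hBm hAB hocc
    by_contra hne
    obtain ⟨w, hwW⟩ := Set.nonempty_iff_ne_empty.mpr hne
    set W := interior (factSet f U₀ τ T) ∩ U₀ with hWdef
    have hWopen : IsOpen W := isOpen_interior.inter hU₀
    have hWcov : W ⊆ ⋃ ξ ∈ Set.Iio lam.ord, A ξ := by
      intro x hx
      have hxf : x ∈ factSet f U₀ τ T := interior_subset hx.1
      obtain ⟨F₀, hF₀T, hxF₀⟩ := factSet_decomp f U₀ hf2 hττ₂ hxf
      obtain ⟨η, hη, hFFη⟩ := hFFsurj F₀ hF₀T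
      refine mem_iUnion₂.mpr ⟨η + 1, hsucclt hη, ?_⟩
      apply subset_closure
      refine mem_iUnion₂.mpr ⟨η, hlt1 η, ?_⟩
      rw [hFFη]
      exact hxF₀
    have hWint : W ⊆ interior (⋃ ξ ∈ Set.Iio lam.ord, A ξ) := interior_maximal hWcov hWopen
    have hwcl : w ∈ closure (⋃ ξ ∈ Set.Iio lam.ord, interior (B ξ)) := hconc (hWint hwW)
    obtain ⟨y, hyW, hyB⟩ := mem_closure_iff.mp hwcl W hWopen hwW
    obtain ⟨ξ, hξ, hyint⟩ := mem_iUnion₂.mp hyB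
    have hBempty : interior (B ξ) ∩ U₀ = ∅ := by
      have hc := hcard (ξ + 1) (hsucclt hξ)
      rw [hT] at hc
      exact IH _ hc (S (ξ + 1)) rfl τ₃ hτ₃0 hτ₃8
    have : y ∈ interior (B ξ) ∩ U₀ := ⟨hyint, hyW.2⟩
    rw [hBempty] at this
    exact this

end Main3

section Final

set_option linter.unusedSectionVars false

variable {K : Type u} [TopologicalSpace K] [CompactSpace K]

/-- The set of points having a neighborhood on which `f` has `K`-uniform oscillation `≤ δ`. -/
def good (f : X → K → ℝ) (δ : ℝ) : Set X :=
  {x | ∃ O : Set X, IsOpen O ∧ x ∈ O ∧ ∀ a ∈ O, ∀ b ∈ O, ∀ k : K, |f a k - f b k| ≤ δ}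

lemma isOpen_good (f : X → K → ℝ) (δ : ℝ) : IsOpen (good f δ) := by
  rw [isOpen_iff_forall_mem_open]
  rintro x ⟨O, hO, hxO, hosc⟩
  exact ⟨O, fun y hy => ⟨O, hO, hy, hosc⟩, hO, hxO⟩

lemma dense_good (hSB : StronglyBaire X) (f : X → K → ℝ)
    (hf1 : ∀ k, Continuous fun x => f x k) (hf2 : ∀ x, Continuous (f x))
    {δ : ℝ} (hδ : 0 < δ) : Dense (good f δ) := by
  haveI := baire_of_stronglyBaire hSB
  rw [dense_iff_inter_open]
  intro U hUopen hUne
  by_contra hcon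
  have hbad : ∀ O : Set X, IsOpen O → O.Nonempty → O ⊆ U →
      ∃ a ∈ O, ∃ b ∈ O, ∃ k : K, δ < |f a k - f b k| := by
    intro O hO hOne hOU
    by_contra hno
    push_neg at hno
    obtain ⟨x, hx⟩ := hOne
    exact hcon ⟨x, hOU hx, ⟨O, hO, hx, fun a ha b hb k => hno a ha b hb k⟩⟩
  have hsub : U ⊆ factSet f U (δ / 16) univ := by
    intro x hx
    refine ⟨subset_closure hx, fun k k' hkk' => ?_⟩
    rw [hkk' x (mem_univ x)]
    simp only [sub_self, abs_zero]
    positivity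
  have hnwd := nwd f U hSB hUopen hf1 hf2 hbad univ (δ / 16) (by positivity) (by linarith)
  have hsub2 : U ⊆ interior (factSet f U (δ / 16) univ) ∩ U :=
    fun x hx => ⟨interior_maximal hsub hUopen hx, hx⟩
  rw [hnwd, Set.subset_empty_iff] at hsub2
  rw [hsub2] at hUne
  exact absurd hUne (by simp)

end Final

end NamiokaSB

/-- Every strongly Baire space is a Namioka space. -/
theorem namioka_of_stronglyBaire (X : Type u) [TopologicalSpace X]
    (h : StronglyBaire X) : NamiokaSpace X := by
  have hB := NamiokaSB.baire_of_stronglyBaire h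
  refine ⟨hB, ?_⟩
  intro K _ _ f hf1 hf2
  haveI := hB
  refine ⟨⋂ n : ℕ, NamiokaSB.good f (1 / (n + 1)), ?_, ?_, ?_⟩
  · exact dense_iInter_of_isOpen (fun n => NamiokaSB.isOpen_good f _)
      (fun n => NamiokaSB.dense_good h f hf1 hf2 (by positivity))
  · exact IsGδ.iInter fun n => (NamiokaSB.isOpen_good f _).isGδ
  · intro a ha k₀
    rw [ContinuousAt, Metric.tendsto_nhds]
    intro ε' hε'
    obtain ⟨n, hn⟩ := exists_nat_one_div_lt (half_pos hε')
    obtain ⟨O, hO, haO, hosc⟩ := Set.mem_iInter.mp ha n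
    have hVopen : IsOpen {k : K | |f a k - f a k₀| < ε' / 2} :=
      isOpen_lt (continuous_abs.comp ((hf2 a).sub continuous_const)) continuous_const
    have hmem : (O ×ˢ {k : K | |f a k - f a k₀| < ε' / 2}) ∈ nhds (a, k₀) :=
      prod_mem_nhds (hO.mem_nhds haO) (hVopen.mem_nhds (by
        simp only [Set.mem_setOf_eq, sub_self, abs_zero]
        exact half_pos hε'))
    filter_upwards [hmem]
    rintro ⟨x, k⟩ ⟨hxO, hk⟩
    rw [Real.dist_eq]
    have h1 : |f x k - f a k| ≤ 1 / (n + 1) := hosc x hxO a haO k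
    have h2 : |f a k - f a k₀| < ε' / 2 := hk
    calc |f x k - f a k₀| ≤ |f x k - f a k| + |f a k - f a k₀| := abs_sub_le _ _ _
      _ < ε' := by linarith
end
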